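/- arXiv:2101.04481 — 6 statements merged into one kernel-verified Lean document; each statement's English description precedes it below -/
import Mathlib

section
/- For the three-parameter Mittag-Leffler (Prabhakar) function E_{α,β}^δ(z) = Σ_{r≥0} z^r Γ(δ+r)/(Γ(αr+β) r! Γ(δ)), one has ∫_0^∞ t^{β-1} e^{−zt} E_{α,β}^δ(ζ t^α) dt = z^{−β}(1 − ζ z^{−α})^{−δ} for real α, β, z > 0 with z^α > |ζ|. -/
open MeasureTheory Real Set

section LaplaceAux

lemma summable_gammaPow {δ : ℝ} (hδ : 0 < δ) {x : ℝ} (hx : |x| < 1) :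
    Summable (fun r : ℕ => Real.Gamma (δ + r) / (Nat.factorial r) * x ^ r) := by
  rcases eq_or_ne x 0 with rfl | hx0
  · apply summable_of_ne_finset_zero (s := {0})
    intro r hr
    simp only [Finset.mem_singleton] at hr
    simp [zero_pow hr]
  · have hΓpos : ∀ n : ℕ, (0:ℝ) < Real.Gamma (δ + n) := fun n =>
      Real.Gamma_pos_of_pos (by positivity)
    have hne : ∀ n : ℕ, Real.Gamma (δ + n) / (Nat.factorial n) * x ^ n ≠ 0 := by
      intro n
      exact mul_ne_zero (div_ne_zero (hΓpos n).ne' (by positivity)) (pow_ne_zero _ hx0)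
    apply summable_of_ratio_test_tendsto_lt_one hx (Filter.Eventually.of_forall hne)
    have key : ∀ n : ℕ,
        ‖Real.Gamma (δ + ((n+1 : ℕ) : ℝ)) / (Nat.factorial (n+1)) * x ^ (n+1)‖ /
          ‖Real.Gamma (δ + n) / (Nat.factorial n) * x ^ n‖
        = (1 + (δ - 1) * (1 / (n + 1))) * |x| := by
      intro n
      have h1 : Real.Gamma (δ + ((n+1 : ℕ) : ℝ)) = (δ + n) * Real.Gamma (δ + n) := by
        have h : δ + (((n+1:ℕ)) : ℝ) = (δ + n) + 1 := by push_cast; ring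
        rw [h, Real.Gamma_add_one (by positivity)]
      have h2 : ((Nat.factorial (n+1) : ℝ)) = (n + 1) * (Nat.factorial n) := by
        rw [Nat.factorial_succ]; push_cast; ring
      rw [Real.norm_eq_abs, Real.norm_eq_abs, abs_mul, abs_mul, abs_div, abs_div,
        abs_of_pos (hΓpos (n+1)), abs_of_pos (hΓpos n), pow_succ, abs_mul]
      rw [h1, h2]
      have hn1 : (0:ℝ) < (n:ℝ) + 1 := by positivity
      have hfn : (0:ℝ) < (Nat.factorial n : ℝ) := by positivity
      have haxn : (0:ℝ) ≤ |x| ^ n := by positivity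
      have hxa : (0:ℝ) < |x| ^ n := by
        rw [← abs_pow]; exact abs_pos.mpr (pow_ne_zero n hx0)
      rw [abs_of_pos hfn, abs_of_pos (show (0:ℝ) < ((n:ℝ)+1) * (Nat.factorial n) by positivity)]
      field_simp
      ring
    rw [show (|x|) = (1 + (δ-1) * 0) * |x| by ring]
    refine Filter.Tendsto.congr (fun n => (key n).symm) ?_
    exact (((tendsto_one_div_add_atTop_nhds_zero_nat).const_mul (δ-1)).const_add 1).mul_const _

lemma integrableOn_rpow_mul_exp_neg_mul {a z : ℝ} (ha : 0 < a) (hz : 0 < z) :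
    IntegrableOn (fun t : ℝ => t ^ (a - 1) * Real.exp (-(z * t))) (Ioi 0) := by
  have h0 : IntegrableOn (fun t : ℝ => Real.exp (-t) * t ^ (a - 1)) (Ioi 0) :=
    Real.GammaIntegral_convergent ha
  have h1 : IntegrableOn (fun t : ℝ => Real.exp (-(z * t)) * (z * t) ^ (a - 1)) (Ioi 0) := by
    have h := integrableOn_Ioi_comp_mul_left_iff
      (fun s : ℝ => Real.exp (-s) * s ^ (a - 1)) 0 hz
    rw [mul_zero] at h
    exact h.2 h0
  have h2 : IntegrableOn
      (fun t : ℝ => ((z : ℝ) ^ (a - 1))⁻¹ * (Real.exp (-(z * t)) * (z * t) ^ (a - 1)))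
      (Ioi 0) := h1.const_mul _
  apply MeasureTheory.IntegrableOn.congr_fun h2 ?_ measurableSet_Ioi
  intro t ht
  have ht' : (0:ℝ) < t := ht
  have : (z * t) ^ (a - 1) = z ^ (a - 1) * t ^ (a - 1) :=
    Real.mul_rpow hz.le ht'.le
  show ((z : ℝ) ^ (a - 1))⁻¹ * (Real.exp (-(z * t)) * (z * t) ^ (a - 1))
      = t ^ (a - 1) * Real.exp (-(z * t))
  rw [this]
  have hzne : z ^ (a - 1) ≠ 0 := (Real.rpow_pos_of_pos hz _).ne'
  field_simp

lemma tsum_binomial {δ : ℝ} (hδ : 0 < δ) {x : ℝ} (hx : |x| < 1) :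
    ∑' r : ℕ, Real.Gamma (δ + r) / (Nat.factorial r) * x ^ r
      = (1 - x) ^ (-δ) * Real.Gamma δ := by
  have hx1 : 0 < 1 - x := by
    have := abs_lt.mp hx; linarith
  set F : ℕ → ℝ → ℝ := fun r t =>
    (x ^ r / (Nat.factorial r)) * (t ^ (δ + r - 1) * Real.exp (-(1 * t))) with hF
  have hpos : ∀ r : ℕ, (0:ℝ) < δ + r := fun r => by positivity
  have hint : ∀ r : ℕ, IntegrableOn (F r) (Ioi 0) := fun r =>
    (integrableOn_rpow_mul_exp_neg_mul (hpos r) one_pos).const_mul _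
  have hval : ∀ r : ℕ, ∫ t in Ioi (0:ℝ), F r t
      = x ^ r / (Nat.factorial r) * Real.Gamma (δ + r) := by
    intro r
    rw [hF]
    simp only
    rw [integral_const_mul,
      integral_rpow_mul_exp_neg_mul_Ioi (hpos r) one_pos]
    norm_num
  have hnorm : ∀ r : ℕ, ∫ t in Ioi (0:ℝ), ‖F r t‖
      = |x| ^ r / (Nat.factorial r) * Real.Gamma (δ + r) := by
    intro r
    have : ∀ t ∈ Ioi (0:ℝ), ‖F r t‖
        = (|x| ^ r / (Nat.factorial r)) * (t ^ (δ + r - 1) * Real.exp (-(1 * t))) := by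
      intro t ht
      have ht' : (0:ℝ) < t := ht
      rw [hF]
      simp only
      rw [norm_mul, norm_mul, Real.norm_eq_abs, Real.norm_eq_abs, Real.norm_eq_abs,
        abs_div, abs_pow, abs_of_pos (Real.rpow_pos_of_pos ht' _),
        abs_of_pos (Real.exp_pos _), abs_of_pos (show (0:ℝ) < (Nat.factorial r : ℝ) by positivity)]
    rw [setIntegral_congr_fun measurableSet_Ioi this, integral_const_mul,
      integral_rpow_mul_exp_neg_mul_Ioi (hpos r) one_pos]
    norm_num
  have hsummable : Summable fun r : ℕ => ∫ t in Ioi (0:ℝ), ‖F r t‖ := by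
    apply Summable.congr (f := fun r : ℕ => Real.Gamma (δ + r) / (Nat.factorial r) * |x| ^ r)
    · exact summable_gammaPow hδ (by rwa [abs_abs])
    · intro r; rw [hnorm r]; ring
  have hswap := MeasureTheory.integral_tsum_of_summable_integral_norm hint hsummable
  have hpt : ∀ t ∈ Ioi (0:ℝ), ∑' r : ℕ, F r t
      = t ^ (δ - 1) * Real.exp (-((1 - x) * t)) := by
    intro t ht
    have ht' : (0:ℝ) < t := ht
    have h1 : ∀ r : ℕ, F r t
        = (t ^ (δ - 1) * Real.exp (-t)) * ((x * t) ^ r / (Nat.factorial r)) := by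
      intro r
      rw [hF]
      simp only
      have : t ^ (δ + r - 1) = t ^ (δ - 1) * t ^ (r : ℕ) := by
        rw [← Real.rpow_natCast t r, ← Real.rpow_add ht']
        ring_nf
      rw [this, mul_pow, one_mul]
      ring
    rw [tsum_congr h1, tsum_mul_left]
    have hexp : ∑' r : ℕ, (x * t) ^ r / (Nat.factorial r : ℝ) = Real.exp (x * t) := by
      rw [Real.exp_eq_exp_ℝ, NormedSpace.exp_eq_tsum_div]
    rw [hexp, mul_assoc, ← Real.exp_add]
    rw [show -t + x * t = -((1 - x) * t) by ring]
  calc ∑' r : ℕ, Real.Gamma (δ + r) / (Nat.factorial r) * x ^ r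
      = ∑' r : ℕ, ∫ t in Ioi (0:ℝ), F r t := by
        refine tsum_congr fun r => ?_
        rw [hval r]; ring
    _ = ∫ t in Ioi (0:ℝ), ∑' r : ℕ, F r t := hswap
    _ = ∫ t in Ioi (0:ℝ), t ^ (δ - 1) * Real.exp (-((1 - x) * t)) :=
        setIntegral_congr_fun measurableSet_Ioi hpt
    _ = (1 / (1 - x)) ^ δ * Real.Gamma δ :=
        integral_rpow_mul_exp_neg_mul_Ioi hδ hx1
    _ = (1 - x) ^ (-δ) * Real.Gamma δ := by
        rw [one_div, ← Real.rpow_neg_one (1-x), ← Real.rpow_mul hx1.le]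
        norm_num

end LaplaceAux


/-- Three-parameter Mittag-Leffler (Prabhakar) function. -/
noncomputable def mittagLeffler3 (α β δ z : ℝ) : ℝ :=
  ∑' r : ℕ, z ^ r * Real.Gamma (δ + r) /
    (Real.Gamma (α * r + β) * (Nat.factorial r) * Real.Gamma δ)

theorem laplace_transform_prabhakar (α β δ z ζ : ℝ) (hα : 0 < α) (hβ : 0 < β)
    (hδ : 0 < δ) (hz : 0 < z) (hζ : |ζ| < z ^ α) :
    ∫ t in Set.Ioi (0 : ℝ),
        t ^ (β - 1) * Real.exp (-z * t) * mittagLeffler3 α β δ (ζ * t ^ α)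
      = z ^ (-β) * (1 - ζ * z ^ (-α)) ^ (-δ) := by
  have hzα : (0:ℝ) < z ^ α := Real.rpow_pos_of_pos hz α
  have hΓδ : (0:ℝ) < Real.Gamma δ := Real.Gamma_pos_of_pos hδ
  have hxabs : ∀ c : ℝ, |c| < z ^ α → |c * z ^ (-α)| < 1 := by
    intro c hc
    rw [abs_mul, abs_of_pos (Real.rpow_pos_of_pos hz _), Real.rpow_neg hz.le]
    rw [← div_eq_mul_inv, div_lt_one hzα]
    exact hc
  have hx : |ζ * z ^ (-α)| < 1 := hxabs ζ hζ
  have hab : ∀ r : ℕ, (0:ℝ) < α * r + β := fun r => by positivity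
  set C : ℕ → ℝ := fun r => ζ ^ r * Real.Gamma (δ + r) /
    (Real.Gamma (α * r + β) * (Nat.factorial r) * Real.Gamma δ) with hC
  set F : ℕ → ℝ → ℝ := fun r t => C r * (t ^ (α * r + β - 1) * Real.exp (-(z * t))) with hF
  have hint : ∀ r : ℕ, IntegrableOn (F r) (Ioi 0) := fun r =>
    (integrableOn_rpow_mul_exp_neg_mul (hab r) hz).const_mul _
  have h1 : ∀ r : ℕ, (1 / z) ^ (α * (r:ℝ) + β) = (z ^ (-α)) ^ r * z ^ (-β) := by
    intro r
    rw [one_div, ← Real.rpow_neg_one z, ← Real.rpow_mul hz.le,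
      show (-1 : ℝ) * (α * (r:ℝ) + β) = (-α) * r + (-β) by ring,
      Real.rpow_add hz, Real.rpow_mul hz.le, Real.rpow_natCast]
  have halg : ∀ (c : ℝ) (r : ℕ),
      (c ^ r * Real.Gamma (δ + r) /
          (Real.Gamma (α * r + β) * (Nat.factorial r) * Real.Gamma δ))
        * ((1 / z) ^ (α * (r:ℝ) + β) * Real.Gamma (α * (r:ℝ) + β))
      = z ^ (-β) / Real.Gamma δ *
          (Real.Gamma (δ + r) / (Nat.factorial r) * (c * z ^ (-α)) ^ r) := by
    intro c r
    have hΓ1 : Real.Gamma (α * r + β) ≠ 0 := (Real.Gamma_pos_of_pos (hab r)).ne'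
    have hfr : ((Nat.factorial r : ℝ)) ≠ 0 := by positivity
    rw [h1 r, mul_pow]
    field_simp
  have hval : ∀ r : ℕ, ∫ t in Ioi (0:ℝ), F r t
      = C r * ((1 / z) ^ (α * (r:ℝ) + β) * Real.Gamma (α * (r:ℝ) + β)) := by
    intro r
    rw [hF]
    simp only
    rw [integral_const_mul, integral_rpow_mul_exp_neg_mul_Ioi (hab r) hz]
  have habsC : ∀ r : ℕ, |C r| = |ζ| ^ r * Real.Gamma (δ + r) /
      (Real.Gamma (α * r + β) * (Nat.factorial r) * Real.Gamma δ) := by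
    intro r
    rw [hC]
    simp only
    rw [abs_div, abs_mul, abs_mul, abs_mul, abs_pow,
      abs_of_pos (Real.Gamma_pos_of_pos (show (0:ℝ) < δ + r by positivity)),
      abs_of_pos (Real.Gamma_pos_of_pos (hab r)), abs_of_pos hΓδ,
      abs_of_pos (show (0:ℝ) < (Nat.factorial r : ℝ) by positivity)]
  have hnorm : ∀ r : ℕ, ∫ t in Ioi (0:ℝ), ‖F r t‖
      = |C r| * ((1 / z) ^ (α * (r:ℝ) + β) * Real.Gamma (α * (r:ℝ) + β)) := by
    intro r
    have heq : ∀ t ∈ Ioi (0:ℝ), ‖F r t‖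
        = |C r| * (t ^ (α * (r:ℝ) + β - 1) * Real.exp (-(z * t))) := by
      intro t ht
      have ht' : (0:ℝ) < t := ht
      rw [hF]
      simp only
      rw [norm_mul, norm_mul, Real.norm_eq_abs, Real.norm_eq_abs, Real.norm_eq_abs,
        abs_of_pos (Real.rpow_pos_of_pos ht' _), abs_of_pos (Real.exp_pos _)]
    rw [setIntegral_congr_fun measurableSet_Ioi heq, integral_const_mul,
      integral_rpow_mul_exp_neg_mul_Ioi (hab r) hz]
  have hsummable : Summable fun r : ℕ => ∫ t in Ioi (0:ℝ), ‖F r t‖ := by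
    have hy : |(|ζ|) * z ^ (-α)| < 1 := hxabs (|ζ|) (by rwa [abs_abs])
    apply Summable.congr (f := fun r : ℕ => z ^ (-β) / Real.Gamma δ *
      (Real.Gamma (δ + r) / (Nat.factorial r) * ((|ζ|) * z ^ (-α)) ^ r))
    · exact ((summable_gammaPow hδ hy).mul_left _)
    · intro r
      rw [hnorm r, habsC r, halg (|ζ|) r]
  have hswap := MeasureTheory.integral_tsum_of_summable_integral_norm hint hsummable
  have hpt : ∀ t ∈ Ioi (0:ℝ),
      t ^ (β - 1) * Real.exp (-z * t) * mittagLeffler3 α β δ (ζ * t ^ α)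
        = ∑' r : ℕ, F r t := by
    intro t ht
    have ht' : (0:ℝ) < t := ht
    rw [mittagLeffler3, ← tsum_mul_left]
    refine tsum_congr fun r => ?_
    have h2 : (ζ * t ^ α) ^ r = ζ ^ r * t ^ (α * (r:ℝ)) := by
      rw [mul_pow, ← Real.rpow_natCast (t ^ α) r, ← Real.rpow_mul ht'.le]
    have h3 : t ^ (α * (r:ℝ) + β - 1) = t ^ (α * (r:ℝ)) * t ^ (β - 1) := by
      rw [← Real.rpow_add ht']
      ring_nf
    rw [hF, hC]
    simp only
    rw [h2, h3, neg_mul]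
    ring
  calc ∫ t in Ioi (0:ℝ),
        t ^ (β - 1) * Real.exp (-z * t) * mittagLeffler3 α β δ (ζ * t ^ α)
      = ∫ t in Ioi (0:ℝ), ∑' r : ℕ, F r t :=
        setIntegral_congr_fun measurableSet_Ioi hpt
    _ = ∑' r : ℕ, ∫ t in Ioi (0:ℝ), F r t := hswap.symm
    _ = ∑' r : ℕ, z ^ (-β) / Real.Gamma δ *
          (Real.Gamma (δ + r) / (Nat.factorial r) * (ζ * z ^ (-α)) ^ r) := by
        refine tsum_congr fun r => ?_
        rw [hval r, hC]
        exact halg ζ r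
    _ = z ^ (-β) / Real.Gamma δ *
          ((1 - ζ * z ^ (-α)) ^ (-δ) * Real.Gamma δ) := by
        rw [tsum_mul_left, tsum_binomial hδ hx]
    _ = z ^ (-β) * (1 - ζ * z ^ (-α)) ^ (-δ) := by
        field_simp
end

section
/- The variance of the marginal Q_j of the fractional Dirichlet distribution satisfies Var(Q_j) ≥ β_j(β̄−β_j)/(β̄²(β̄+1)), with equality iff ν = 1; i.e. the marginals are overdispersed relative to the classical Dirichlet(β) marginals. -/
theorem overdispersion_fracDirichlet (ν βj βbar : ℝ) (hν : ν ∈ Set.Ioc (0 : ℝ) 1)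
    (hβj : 0 < βj) (hβ : βj < βbar) :
    βj * (βbar - βj) / (βbar ^ 2 * (βbar + 1)) * (1 + βbar * (1 - ν))
      ≥ βj * (βbar - βj) / (βbar ^ 2 * (βbar + 1)) ∧
    (βj * (βbar - βj) / (βbar ^ 2 * (βbar + 1)) * (1 + βbar * (1 - ν))
      = βj * (βbar - βj) / (βbar ^ 2 * (βbar + 1)) ↔ ν = 1) := by
  obtain ⟨hν0, hν1⟩ := hν
  have hbar : 0 < βbar := hβj.trans hβ
  have hC : 0 < βj * (βbar - βj) / (βbar ^ 2 * (βbar + 1)) := by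
    apply div_pos (mul_pos hβj (by linarith)) (mul_pos (by positivity) (by linarith))
  constructor
  · nlinarith [mul_nonneg hC.le (mul_nonneg hbar.le (by linarith : (0:ℝ) ≤ 1 - ν))]
  · constructor
    · intro h
      have : βj * (βbar - βj) / (βbar ^ 2 * (βbar + 1)) * (βbar * (1 - ν)) = 0 := by linear_combination h
      have h2 : βbar * (1 - ν) = 0 := by
        rcases mul_eq_zero.mp this with h' | h'
        · exact absurd h' hC.ne'
        · exact h'
      rcases mul_eq_zero.mp h2 with h' | h'
      · exact absurd h' hbar.ne'
      · linarith
    · intro h; rw [h]; ring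
end

section
/- For ν > 0 and β₁, β₂ > 0, ∫_0^1 q^{νβ₁−1}(1−q)^{νβ₂−1}(q^ν + (1−q)^ν)^{−(β₁+β₂)} dq = Γ(β₁)Γ(β₂)/(ν Γ(β₁+β₂)). -/
open MeasureTheory Real Set

private theorem real_beta_aux (a b : ℝ) (ha : 0 < a) (hb : 0 < b) :
    ∫ x in Set.Ioo (0 : ℝ) 1, x ^ (a - 1) * (1 - x) ^ (b - 1)
      = Real.Gamma a * Real.Gamma b / Real.Gamma (a + b) := by
  have key := Complex.Gamma_mul_Gamma_eq_betaIntegral (s := (a : ℂ)) (t := (b : ℂ))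
    (by simpa using ha) (by simpa using hb)
  have hG : Real.Gamma (a + b) ≠ 0 := (Real.Gamma_pos_of_pos (by linarith)).ne'
  have hbeta : Complex.betaIntegral a b
      = ((∫ x in Set.Ioo (0 : ℝ) 1, x ^ (a - 1) * (1 - x) ^ (b - 1) : ℝ) : ℂ) := by
    rw [Complex.betaIntegral, intervalIntegral.integral_of_le zero_le_one,
      MeasureTheory.integral_Ioc_eq_integral_Ioo]
    calc (∫ x in Set.Ioo (0:ℝ) 1, (x : ℂ) ^ ((a:ℂ) - 1) * (1 - (x : ℂ)) ^ ((b:ℂ) - 1))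
        = ∫ x in Set.Ioo (0:ℝ) 1, ((x ^ (a - 1) * (1 - x) ^ (b - 1) : ℝ) : ℂ) := by
          refine setIntegral_congr_fun measurableSet_Ioo fun x hx => ?_
          have e1 : ((a:ℂ) - 1) = ((a - 1 : ℝ) : ℂ) := by push_cast; ring
          have e2 : ((b:ℂ) - 1) = ((b - 1 : ℝ) : ℂ) := by push_cast; ring
          have e3 : (1 - (x:ℂ)) = ((1 - x : ℝ) : ℂ) := by push_cast; ring
          rw [e1, e2, e3, ← Complex.ofReal_cpow hx.1.le,
            ← Complex.ofReal_cpow (by linarith [hx.2] : (0:ℝ) ≤ 1 - x), ← Complex.ofReal_mul]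
      _ = _ := integral_ofReal
  rw [hbeta, ← Complex.ofReal_add, Complex.Gamma_ofReal, Complex.Gamma_ofReal,
    Complex.Gamma_ofReal, ← Complex.ofReal_mul, ← Complex.ofReal_mul] at key
  have key' := Complex.ofReal_inj.mp key
  field_simp
  linarith [key']

private theorem aux_hasDerivAt {ν : ℝ} {q : ℝ} (hq0 : 0 < q) (hq1 : q < 1) :
    HasDerivAt (fun q : ℝ => q ^ ν / (q ^ ν + (1 - q) ^ ν))
      (ν * q ^ (ν - 1) * (1 - q) ^ (ν - 1) / (q ^ ν + (1 - q) ^ ν) ^ 2) q := by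
  have h1q : 0 < 1 - q := by linarith
  have hS : 0 < q ^ ν + (1 - q) ^ ν :=
    add_pos (Real.rpow_pos_of_pos hq0 ν) (Real.rpow_pos_of_pos h1q ν)
  have h1 : HasDerivAt (fun q : ℝ => q ^ ν) (ν * q ^ (ν - 1)) q :=
    Real.hasDerivAt_rpow_const (Or.inl hq0.ne')
  have h2 : HasDerivAt (fun q : ℝ => (1 - q) ^ ν) (ν * (1 - q) ^ (ν - 1) * (-1)) q := by
    have inner : HasDerivAt (fun q : ℝ => 1 - q) (-1) q := by
      simpa using (hasDerivAt_id q).const_sub 1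
    exact (Real.hasDerivAt_rpow_const (Or.inl h1q.ne')).comp q inner
  have hdiv := h1.div (h1.add h2) hS.ne'
  refine hdiv.congr_deriv ?_
  simp only [Pi.add_apply]
  have e1 : q ^ ν = q ^ (ν - 1) * q := by
    nth_rewrite 1 [show ν = (ν - 1) + 1 by ring]
    rw [Real.rpow_add_one hq0.ne']
  have e2 : (1 - q) ^ ν = (1 - q) ^ (ν - 1) * (1 - q) := by
    nth_rewrite 1 [show ν = (ν - 1) + 1 by ring]
    rw [Real.rpow_add_one h1q.ne']
  rw [e1, e2]
  ring

private theorem aux_deriv_pos {ν : ℝ} (hν : 0 < ν) {q : ℝ} (hq0 : 0 < q) (hq1 : q < 1) :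
    0 < ν * q ^ (ν - 1) * (1 - q) ^ (ν - 1) / (q ^ ν + (1 - q) ^ ν) ^ 2 := by
  have h1q : 0 < 1 - q := by linarith
  have hS : 0 < q ^ ν + (1 - q) ^ ν :=
    add_pos (Real.rpow_pos_of_pos hq0 ν) (Real.rpow_pos_of_pos h1q ν)
  have := Real.rpow_pos_of_pos hq0 (ν - 1)
  have := Real.rpow_pos_of_pos h1q (ν - 1)
  positivity

private theorem aux_image {ν : ℝ} (hν : 0 < ν) :
    (fun q : ℝ => q ^ ν / (q ^ ν + (1 - q) ^ ν)) '' Set.Ioo 0 1 = Set.Ioo 0 1 := by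
  set f : ℝ → ℝ := fun q => q ^ ν / (q ^ ν + (1 - q) ^ ν) with hf
  have hcont : ContinuousOn f (Set.Icc 0 1) := by
    have hc : Continuous fun x : ℝ => x ^ ν := by
      rw [continuous_iff_continuousAt]
      exact fun x => Real.continuousAt_rpow_const x ν (Or.inr hν.le)
    have hc2 : Continuous fun x : ℝ => (1 - x) ^ ν := hc.comp (continuous_const.sub continuous_id)
    apply ContinuousOn.div (hc.continuousOn) ((hc.continuousOn).add hc2.continuousOn)
    intro x hx
    rcases eq_or_lt_of_le hx.1 with h | h
    · simp [← h, Real.zero_rpow hν.ne', Real.one_rpow]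
    · exact (add_pos_of_pos_of_nonneg (Real.rpow_pos_of_pos h ν)
        (Real.rpow_nonneg (by linarith [hx.2]) ν)).ne'
  have hmono : StrictMonoOn f (Set.Icc 0 1) := by
    apply strictMonoOn_of_deriv_pos (convex_Icc 0 1) hcont
    intro x hx
    rw [interior_Icc] at hx
    rw [(aux_hasDerivAt hx.1 hx.2).deriv]
    exact aux_deriv_pos hν hx.1 hx.2
  have hf0 : f 0 = 0 := by simp [hf, Real.zero_rpow hν.ne']
  have hf1 : f 1 = 1 := by simp [hf, Real.zero_rpow hν.ne']
  apply Subset.antisymm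
  · rintro - ⟨x, hx, rfl⟩
    constructor
    · rw [← hf0]; exact hmono (by simp) (by constructor <;> linarith [hx.1, hx.2]) hx.1
    · rw [← hf1]; exact hmono (by constructor <;> linarith [hx.1, hx.2]) (by simp) hx.2
  · have := intermediate_value_Ioo (le_of_lt one_pos) hcont
    rw [hf0, hf1] at this
    exact this

private theorem aux_pointwise (ν β₁ β₂ : ℝ) (hν : 0 < ν) {q : ℝ} (hq0 : 0 < q) (hq1 : q < 1) :
    |ν * q ^ (ν - 1) * (1 - q) ^ (ν - 1) / (q ^ ν + (1 - q) ^ ν) ^ 2| *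
      ((q ^ ν / (q ^ ν + (1 - q) ^ ν)) ^ (β₁ - 1) *
        (1 - q ^ ν / (q ^ ν + (1 - q) ^ ν)) ^ (β₂ - 1))
      = ν * (q ^ (ν * β₁ - 1) * (1 - q) ^ (ν * β₂ - 1)
          * (q ^ ν + (1 - q) ^ ν) ^ (-(β₁ + β₂))) := by
  have h1q : 0 < 1 - q := by linarith
  set S : ℝ := q ^ ν + (1 - q) ^ ν with hSdef
  have hS : 0 < S := add_pos (Real.rpow_pos_of_pos hq0 ν) (Real.rpow_pos_of_pos h1q ν)
  have habs : |ν * q ^ (ν - 1) * (1 - q) ^ (ν - 1) / S ^ 2|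
      = ν * q ^ (ν - 1) * (1 - q) ^ (ν - 1) / S ^ 2 := by
    apply abs_of_pos
    have := Real.rpow_pos_of_pos hq0 (ν - 1)
    have := Real.rpow_pos_of_pos h1q (ν - 1)
    positivity
  have h1mg : 1 - q ^ ν / S = (1 - q) ^ ν / S := by
    rw [eq_div_iff hS.ne', sub_mul, div_mul_cancel₀ _ hS.ne', hSdef]; ring
  rw [habs, h1mg,
    Real.div_rpow (Real.rpow_nonneg hq0.le ν) hS.le,
    Real.div_rpow (Real.rpow_nonneg h1q.le ν) hS.le]
  have eq1 : (q ^ ν) ^ (β₁ - 1) = q ^ (ν * β₁ - 1) / q ^ (ν - 1) := by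
    rw [← Real.rpow_mul hq0.le, ← Real.rpow_sub hq0]; congr 1; ring
  have eq2 : ((1 - q) ^ ν) ^ (β₂ - 1) = (1 - q) ^ (ν * β₂ - 1) / (1 - q) ^ (ν - 1) := by
    rw [← Real.rpow_mul h1q.le, ← Real.rpow_sub h1q]; congr 1; ring
  have eq3 : S ^ (β₁ + β₂) = S ^ (β₁ - 1) * S ^ (β₂ - 1) * S ^ 2 := by
    rw [← Real.rpow_natCast S 2, ← Real.rpow_add hS, ← Real.rpow_add hS]
    congr 1; push_cast; ring
  rw [Real.rpow_neg hS.le, eq1, eq2, eq3]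
  have n1 : q ^ (ν - 1) ≠ 0 := (Real.rpow_pos_of_pos hq0 _).ne'
  have n2 : (1 - q) ^ (ν - 1) ≠ 0 := (Real.rpow_pos_of_pos h1q _).ne'
  have n3 : S ^ (β₁ - 1) ≠ 0 := (Real.rpow_pos_of_pos hS _).ne'
  have n4 : S ^ (β₂ - 1) ≠ 0 := (Real.rpow_pos_of_pos hS _).ne'
  field_simp

theorem genDirichlet_normalization_two (ν β₁ β₂ : ℝ) (hν : 0 < ν)
    (hβ₁ : 0 < β₁) (hβ₂ : 0 < β₂) :
    ∫ q in Set.Ioo (0 : ℝ) 1,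
        q ^ (ν * β₁ - 1) * (1 - q) ^ (ν * β₂ - 1)
          * (q ^ ν + (1 - q) ^ ν) ^ (-(β₁ + β₂))
      = Real.Gamma β₁ * Real.Gamma β₂ / (ν * Real.Gamma (β₁ + β₂)) := by
  have hG : Real.Gamma (β₁ + β₂) ≠ 0 := (Real.Gamma_pos_of_pos (by linarith)).ne'
  have cov := integral_image_eq_integral_abs_deriv_smul (s := Set.Ioo (0:ℝ) 1)
    (f := fun q : ℝ => q ^ ν / (q ^ ν + (1 - q) ^ ν))
    (f' := fun q : ℝ => ν * q ^ (ν - 1) * (1 - q) ^ (ν - 1) / (q ^ ν + (1 - q) ^ ν) ^ 2)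
    measurableSet_Ioo
    (fun x hx => (aux_hasDerivAt hx.1 hx.2).hasDerivWithinAt)
    (fun x hx y hy hxy => by
      have hmono : StrictMonoOn (fun q : ℝ => q ^ ν / (q ^ ν + (1 - q) ^ ν)) (Set.Ioo 0 1) := by
        apply strictMonoOn_of_deriv_pos (convex_Ioo 0 1)
        · exact fun z hz => ((aux_hasDerivAt hz.1 hz.2).continuousAt).continuousWithinAt
        · intro z hz
          rw [interior_Ioo] at hz
          rw [(aux_hasDerivAt hz.1 hz.2).deriv]
          exact aux_deriv_pos hν hz.1 hz.2
      exact hmono.injOn hx hy hxy)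
    (fun x => x ^ (β₁ - 1) * (1 - x) ^ (β₂ - 1))
  rw [aux_image hν, real_beta_aux β₁ β₂ hβ₁ hβ₂] at cov
  have congr1 : ∫ q in Set.Ioo (0:ℝ) 1,
      |ν * q ^ (ν - 1) * (1 - q) ^ (ν - 1) / (q ^ ν + (1 - q) ^ ν) ^ 2| •
        ((fun x : ℝ => x ^ (β₁ - 1) * (1 - x) ^ (β₂ - 1))
          (q ^ ν / (q ^ ν + (1 - q) ^ ν)))
      = ∫ q in Set.Ioo (0:ℝ) 1, ν * (q ^ (ν * β₁ - 1) * (1 - q) ^ (ν * β₂ - 1)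
          * (q ^ ν + (1 - q) ^ ν) ^ (-(β₁ + β₂))) := by
    refine setIntegral_congr_fun measurableSet_Ioo fun q hq => ?_
    simp only [smul_eq_mul]
    exact aux_pointwise ν β₁ β₂ hν hq.1 hq.2
  rw [congr1, integral_const_mul] at cov
  have hν' : ν ≠ 0 := hν.ne'
  field_simp at cov ⊢
  linarith [cov]
end

section
/- For ν > 0 and β₁,…,βₙ > 0 with β̄ = β₁+⋯+βₙ, the integral over the open simplex {q ∈ (0,1)^{n−1} : Σ qᵢ < 1} of (∏_{i=1}^{n−1} qᵢ^{νβᵢ−1}) (1−Σ qᵢ)^{νβₙ−1} (q₁^ν + ⋯ + q_{n−1}^ν + (1−Σ qᵢ)^ν)^{−β̄} equals ∏_{i=1}^n Γ(βᵢ) / (ν^{n−1} Γ(β̄)). -/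
open MeasureTheory Real Set

lemma oneDim_integral {ν b c : ℝ} (hν : 0 < ν) (hb : 0 < b) (hc : 0 < c) :
    ∫ x in Ioi (0:ℝ), x ^ (ν * b - 1) * Real.exp (-(c * x ^ ν)) =
      c ^ (-b) * ((1 / ν) * Real.Gamma b) := by
  have h := integral_rpow_mul_exp_neg_mul_rpow hν (q := ν * b - 1)
    (by nlinarith [mul_pos hν hb] : (-1:ℝ) < ν * b - 1) hc
  have he : (ν * b - 1 + 1) / ν = b := by field_simp; ring
  rw [he] at h
  simp only [neg_mul] at h ⊢
  rw [h]
  rw [show -(ν * b - 1 + 1) / ν = -b by field_simp; ring]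
  ring

lemma oneDim_integrable {ν b : ℝ} (hν : 0 < ν) (hb : 0 < b) :
    IntegrableOn (fun x : ℝ => x ^ (ν * b - 1) * Real.exp (-x ^ ν)) (Ioi 0) := by
  have h := (integrableOn_Ioi_comp_rpow_iff' (fun y : ℝ => y ^ (b - 1) * Real.exp (-y)) hν.ne').mpr
    (by simpa [mul_comm] using Real.GammaIntegral_convergent hb)
  refine h.congr_fun (fun x hx => ?_) measurableSet_Ioi
  have hx0 : (0:ℝ) < x := hx
  beta_reduce
  rw [smul_eq_mul, ← Real.rpow_mul hx0.le, ← mul_assoc, ← Real.rpow_add hx0]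
  ring_nf

noncomputable def gdSumL (m : ℕ) : (Fin m → ℝ) →L[ℝ] ℝ := ∑ i, ContinuousLinearMap.proj i

lemma gdSumL_apply {m : ℕ} (x : Fin m → ℝ) : gdSumL m x = ∑ i, x i := by
  simp [gdSumL]

noncomputable def gdDer (m : ℕ) (t : ℝ) (q : Fin m → ℝ) :
    ((Fin m → ℝ) × ℝ) →L[ℝ] ((Fin m → ℝ) × ℝ) :=
  (t • ContinuousLinearMap.fst ℝ (Fin m → ℝ) ℝ
      + (ContinuousLinearMap.snd ℝ (Fin m → ℝ) ℝ).smulRight q).prod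
    ((1 - ∑ i, q i) • ContinuousLinearMap.snd ℝ (Fin m → ℝ) ℝ
      - t • ((gdSumL m).comp (ContinuousLinearMap.fst ℝ (Fin m → ℝ) ℝ)))

lemma gdDer_apply {m : ℕ} (t : ℝ) (q : Fin m → ℝ) (p : (Fin m → ℝ) × ℝ) :
    gdDer m t q p = (t • p.1 + p.2 • q, (1 - ∑ i, q i) * p.2 - t * ∑ i, p.1 i) := by
  simp [gdDer, gdSumL_apply, smul_eq_mul]

lemma gdHasFDeriv {m : ℕ} (t : ℝ) (q : Fin m → ℝ) :
    HasFDerivAt (fun p : (Fin m → ℝ) × ℝ => (p.2 • p.1, p.2 * (1 - ∑ i, p.1 i)))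
      (gdDer m t q) (q, t) := by
  have hsum : HasFDerivAt (fun p : (Fin m → ℝ) × ℝ => ∑ i, p.1 i)
      ((gdSumL m).comp (ContinuousLinearMap.fst ℝ (Fin m → ℝ) ℝ)) ((q, t)) := by
    have hfun : (fun p : (Fin m → ℝ) × ℝ => ∑ i, p.1 i)
        = ⇑((gdSumL m).comp (ContinuousLinearMap.fst ℝ (Fin m → ℝ) ℝ)) := by
      funext p; simp [gdSumL_apply]
    rw [hfun]
    exact ContinuousLinearMap.hasFDerivAt _
  have h := (hasFDerivAt_snd.smul hasFDerivAt_fst).prodMk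
    (hasFDerivAt_snd.mul ((hasFDerivAt_const (1:ℝ) ((q, t) : (Fin m → ℝ) × ℝ)).sub hsum))
  refine h.congr_fderiv ?_
  refine ContinuousLinearMap.ext fun p => Prod.ext ?_ ?_ <;>
    simp [gdDer, gdSumL_apply, smul_eq_mul, sub_eq_add_neg, ContinuousLinearMap.smulRight_apply] <;>
    ring

lemma gdDer_det {m : ℕ} (t : ℝ) (q : Fin m → ℝ) (hq : ∑ i, q i < 1) :
    (gdDer m t q).det = t ^ m := by
  have ha : (0:ℝ) < 1 - ∑ i, q i := by linarith
  set a := 1 - ∑ i, q i with hadef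
  rw [ContinuousLinearMap.det]
  set b := (Pi.basisFun ℝ (Fin m)).prod (Module.Basis.singleton Unit ℝ) with hb
  rw [← LinearMap.det_toMatrix b]
  have hM : LinearMap.toMatrix b b (gdDer m t q) =
      Matrix.fromBlocks (t • 1) (Matrix.replicateCol Unit q)
        (Matrix.replicateRow Unit (fun _ => -t)) (a • 1) := by
    ext i j
    rcases i with i | i <;> rcases j with j | j <;>
      simp [LinearMap.toMatrix_apply, hb, Module.Basis.prod_apply, gdDer_apply,
        Pi.basisFun_apply, Matrix.one_apply, Pi.single_apply, mul_comm,
        Finset.sum_ite_eq, Matrix.replicateCol_apply, Matrix.replicateRow_apply] <;>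
      aesop
  rw [hM]
  have hinv1 : (a⁻¹ • 1 : Matrix Unit Unit ℝ) * (a • 1) = 1 := by
    rw [smul_mul_smul_comm, one_mul, inv_mul_cancel₀ ha.ne', one_smul]
  have hinv2 : (a • 1 : Matrix Unit Unit ℝ) * (a⁻¹ • 1) = 1 := by
    rw [smul_mul_smul_comm, one_mul, mul_inv_cancel₀ ha.ne', one_smul]
  letI : Invertible ((a • 1 : Matrix Unit Unit ℝ)) := ⟨a⁻¹ • 1, hinv1, hinv2⟩
  rw [Matrix.det_fromBlocks₂₂]
  have hinv : (⅟(a • 1 : Matrix Unit Unit ℝ)) = a⁻¹ • 1 := rfl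
  have hS : (t • 1 : Matrix (Fin m) (Fin m) ℝ) -
      Matrix.replicateCol Unit q * ⅟(a • 1 : Matrix Unit Unit ℝ) * Matrix.replicateRow Unit (fun _ => -t)
      = t • (1 + Matrix.replicateCol Unit (a⁻¹ • q) * Matrix.replicateRow Unit (fun _ => (1:ℝ))) := by
    rw [hinv]
    ext i j
    simp [Matrix.mul_apply, Matrix.replicateCol_apply, Matrix.replicateRow_apply, Matrix.one_apply,
      mul_comm, mul_assoc]
    split_ifs <;> ring
  rw [hS, Matrix.det_smul, Matrix.det_smul, Matrix.det_one_add_replicateCol_mul_replicateRow]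
  simp [Matrix.det_smul, dotProduct, Finset.mul_sum]
  rw [← Finset.mul_sum]
  have h1 : a * (t ^ m * (1 + a⁻¹ * ∑ i, q i)) = (a + ∑ i, q i) * t ^ m := by
    field_simp
  rw [h1, hadef]
  ring

def gdMap (m : ℕ) : ((Fin m → ℝ) × ℝ) → ((Fin m → ℝ) × ℝ) :=
  fun p => (p.2 • p.1, p.2 * (1 - ∑ i, p.1 i))

def gdSimplex (m : ℕ) : Set (Fin m → ℝ) :=
  {q : Fin m → ℝ | (∀ i, 0 < q i ∧ q i < 1) ∧ ∑ i, q i < 1}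

lemma gdSimplex_measurable (m : ℕ) : MeasurableSet (gdSimplex m) := by
  have : gdSimplex m = (⋂ i, ({q : Fin m → ℝ | 0 < q i} ∩ {q | q i < 1}))
      ∩ {q : Fin m → ℝ | ∑ i, q i < 1} := by
    ext q; simp [gdSimplex, forall_and]
  rw [this]
  refine MeasurableSet.inter (MeasurableSet.iInter fun i => ?_) ?_
  · exact (measurableSet_lt measurable_const (measurable_pi_apply i)).inter
      (measurableSet_lt (measurable_pi_apply i) measurable_const)
  · exact measurableSet_lt (Finset.measurable_sum Finset.univ fun i _ => measurable_pi_apply i)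
      measurable_const

lemma gdMap_sum {m : ℕ} (p : (Fin m → ℝ) × ℝ) :
    (∑ i, (gdMap m p).1 i) + (gdMap m p).2 = p.2 := by
  simp only [gdMap, Pi.smul_apply, smul_eq_mul]
  rw [← Finset.mul_sum]
  ring

lemma gdInjOn (m : ℕ) : Set.InjOn (gdMap m) (gdSimplex m ×ˢ Ioi (0:ℝ)) := by
  rintro ⟨q, t⟩ hp ⟨q', t'⟩ hp' h
  have ht : t = t' := by
    have h1 := gdMap_sum (m := m) (q, t)
    have h2 := gdMap_sum (m := m) (q', t')
    rw [h] at h1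
    exact (h1.symm.trans h2)
  have ht0 : (0:ℝ) < t := hp.2
  have hq : q = q' := by
    have h1 : t • q = t' • q' := congrArg Prod.fst h
    rw [← ht] at h1
    have := smul_right_injective (Fin m → ℝ) ht0.ne' h1
    exact this
  rw [ht, hq]

lemma gdImage (m : ℕ) :
    gdMap m '' (gdSimplex m ×ˢ Ioi (0:ℝ)) = (univ.pi fun _ : Fin m => Ioi (0:ℝ)) ×ˢ Ioi (0:ℝ) := by
  ext z
  constructor
  · rintro ⟨p, ⟨⟨hq, hqs⟩, ht⟩, rfl⟩
    have ht0 : (0:ℝ) < p.2 := ht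
    simp only [mem_prod, mem_pi, mem_univ, mem_Ioi, forall_true_left, gdMap, Pi.smul_apply,
      smul_eq_mul]
    constructor
    · intro i
      exact mul_pos ht0 (hq i).1
    · exact mul_pos ht0 (by linarith)
  · intro hz
    obtain ⟨hy, hy0⟩ := hz
    set y := z.1 with hydef
    set y0 := z.2 with hy0def
    have hy' : ∀ i, 0 < y i := fun i => hy i (mem_univ i)
    have hy0' : (0:ℝ) < y0 := hy0
    set t : ℝ := (∑ i, y i) + y0 with htdef
    have hts : (0:ℝ) ≤ ∑ i, y i := Finset.sum_nonneg fun i _ => (hy' i).le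
    have ht0 : (0:ℝ) < t := by positivity
    refine ⟨(t⁻¹ • y, t), ⟨⟨fun i => ?_, ?_⟩, ht0⟩, ?_⟩
    · simp only [Pi.smul_apply, smul_eq_mul]
      refine ⟨mul_pos (inv_pos.mpr ht0) (hy' i), ?_⟩
      rw [inv_mul_lt_iff₀ ht0, mul_one]
      have := Finset.single_le_sum (f := y) (fun j _ => (hy' j).le) (Finset.mem_univ i)
      simp only [htdef]; linarith
    · have : ∑ i, t⁻¹ * y i = t⁻¹ * ∑ i, y i := by rw [Finset.mul_sum]
      simp only [Pi.smul_apply, smul_eq_mul]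
      rw [this, inv_mul_lt_iff₀ ht0, mul_one]
      simp only [htdef]; linarith
    · have hsum : ∑ i, t⁻¹ * y i = t⁻¹ * ∑ i, y i := by rw [Finset.mul_sum]
      simp only [gdMap, Pi.smul_apply, smul_eq_mul, smul_smul]
      rw [mul_inv_cancel₀ ht0.ne', one_smul]
      have h2 : t * (1 - ∑ i, t⁻¹ * y i) = y0 := by
        rw [hsum, inv_mul_eq_div, mul_sub, mul_one, mul_div_cancel₀ _ ht0.ne', htdef]
        ring
      rw [h2]

lemma gdAlg {m : ℕ} (ν : ℝ) (β : Fin m → ℝ) (βn : ℝ)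
    (q : Fin m → ℝ) (t : ℝ) (hq : ∀ i, 0 < q i) (hqs : ∑ i, q i < 1) (ht : 0 < t) :
    (t ^ m) * ((∏ i, ((t * q i) ^ (ν * β i - 1) * Real.exp (-(t * q i) ^ ν))) *
        ((t * (1 - ∑ i, q i)) ^ (ν * βn - 1) * Real.exp (-(t * (1 - ∑ i, q i)) ^ ν)))
      = ((∏ i, q i ^ (ν * β i - 1)) * (1 - ∑ i, q i) ^ (ν * βn - 1)) *
        (t ^ (ν * ((∑ i, β i) + βn) - 1) *
          Real.exp (-(((∑ i, q i ^ ν) + (1 - ∑ i, q i) ^ ν) * t ^ ν))) := by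
  have ha : (0:ℝ) < 1 - ∑ i, q i := by linarith
  have h1 : ∀ i, (t * q i) ^ (ν * β i - 1) * Real.exp (-(t * q i) ^ ν)
      = t ^ (ν * β i - 1) * (q i ^ (ν * β i - 1) * Real.exp (-(t ^ ν * q i ^ ν))) := by
    intro i
    rw [Real.mul_rpow ht.le (hq i).le, Real.mul_rpow ht.le (hq i).le]
    ring
  simp_rw [h1]
  have he : (m:ℝ) + (∑ i, (ν * β i - 1)) + (ν * βn - 1) = ν * ((∑ i, β i) + βn) - 1 := by
    rw [Finset.sum_sub_distrib, ← Finset.mul_sum, Finset.sum_const, Finset.card_univ,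
      Fintype.card_fin, nsmul_eq_mul, mul_one]
    ring
  have hexp : (∑ i, -(t ^ ν * q i ^ ν)) + -(t ^ ν * (1 - ∑ i, q i) ^ ν)
      = -(((∑ i, q i ^ ν) + (1 - ∑ i, q i) ^ ν) * t ^ ν) := by
    rw [Finset.sum_neg_distrib, ← Finset.mul_sum]
    ring
  rw [Finset.prod_mul_distrib, Finset.prod_mul_distrib, ← Real.rpow_sum_of_pos ht,
    ← Real.exp_sum, Real.mul_rpow ht.le ha.le, Real.mul_rpow ht.le ha.le,
    ← Real.rpow_natCast t m, ← he, ← hexp, Real.rpow_add ht, Real.rpow_add ht, Real.exp_add]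
  ring

theorem genDirichlet_normalization (m : ℕ) (hm : 1 ≤ m) (ν : ℝ) (hν : 0 < ν)
    (β : Fin m → ℝ) (βn : ℝ) (hβ : ∀ i, 0 < β i) (hβn : 0 < βn) :
    ∫ q in {q : Fin m → ℝ | (∀ i, 0 < q i ∧ q i < 1) ∧ ∑ i, q i < 1},
        (∏ i, q i ^ (ν * β i - 1)) * (1 - ∑ i, q i) ^ (ν * βn - 1)
          * ((∑ i, q i ^ ν) + (1 - ∑ i, q i) ^ ν) ^ (-((∑ i, β i) + βn))
      = (∏ i, Real.Gamma (β i)) * Real.Gamma βn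
          / (ν ^ m * Real.Gamma ((∑ i, β i) + βn)) := by
  classical
  have hB : 0 < (∑ i, β i) + βn :=
    add_pos_of_nonneg_of_pos (Finset.sum_nonneg fun i _ => (hβ i).le) hβn
  haveI : Measure.IsAddHaarMeasure (volume : Measure ((Fin m → ℝ) × ℝ)) :=
    Measure.prod.instIsAddHaarMeasure _ _
  have hs : MeasurableSet (gdSimplex m ×ˢ Ioi (0:ℝ)) :=
    (gdSimplex_measurable m).prod measurableSet_Ioi
  set g : ((Fin m → ℝ) × ℝ) → ℝ := fun y =>
    (∏ i, (y.1 i ^ (ν * β i - 1) * Real.exp (-(y.1 i) ^ ν)))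
      * (y.2 ^ (ν * βn - 1) * Real.exp (-(y.2) ^ ν)) with hgdef
  have hf' : ∀ p ∈ gdSimplex m ×ˢ Ioi (0:ℝ),
      HasFDerivWithinAt (gdMap m) (gdDer m p.2 p.1) (gdSimplex m ×ˢ Ioi (0:ℝ)) p := by
    intro p _
    have h := (gdHasFDeriv (m := m) p.2 p.1).hasFDerivWithinAt
      (s := gdSimplex m ×ˢ Ioi (0:ℝ))
    rw [Prod.mk.eta] at h
    exact h
  have key := integral_image_eq_integral_abs_det_fderiv_smul volume hs hf' (gdInjOn m) g
  rw [gdImage m] at key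
  have h1d : ∀ b : ℝ, 0 < b →
      (∫ x in Ioi (0:ℝ), x ^ (ν * b - 1) * Real.exp (-x ^ ν)) = (1/ν) * Real.Gamma b := by
    intro b hb
    have h := oneDim_integral (ν := ν) (b := b) (c := 1) hν hb one_pos
    simpa using h
  have hindprod : (univ.pi fun _ : Fin m => Ioi (0:ℝ)).indicator
      (fun y : Fin m → ℝ => ∏ i, (y i ^ (ν * β i - 1) * Real.exp (-(y i) ^ ν)))
      = fun y => ∏ i, (Ioi (0:ℝ)).indicator
          (fun x => x ^ (ν * β i - 1) * Real.exp (-x ^ ν)) (y i) := by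
    funext y
    by_cases hy : y ∈ univ.pi fun _ : Fin m => Ioi (0:ℝ)
    · rw [indicator_of_mem hy]
      refine Finset.prod_congr rfl fun i _ => ?_
      rw [indicator_of_mem (show y i ∈ Ioi (0:ℝ) from hy i (mem_univ i))]
    · rw [indicator_of_notMem hy]
      obtain ⟨i, hi⟩ : ∃ i, y i ∉ Ioi (0:ℝ) := by simpa [mem_pi] using hy
      exact (Finset.prod_eq_zero (Finset.mem_univ i) (indicator_of_notMem hi _)).symm
  have hLHS : (∫ y in ((univ.pi fun _ : Fin m => Ioi (0:ℝ)) ×ˢ Ioi (0:ℝ)), g y)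
      = (∏ i, ((1/ν) * Real.Gamma (β i))) * ((1/ν) * Real.Gamma βn) := by
    simp only [hgdef]
    rw [Measure.volume_eq_prod _ _, setIntegral_prod_mul
      (fun y : Fin m → ℝ => ∏ i, (y i ^ (ν * β i - 1) * Real.exp (-(y i) ^ ν)))
      (fun x : ℝ => x ^ (ν * βn - 1) * Real.exp (-x ^ ν))]
    congr 1
    · rw [← integral_indicator (MeasurableSet.univ_pi fun _ => measurableSet_Ioi), hindprod]
      beta_reduce
      rw [volume_pi, integral_fintype_prod_eq_prod
          (f := fun i x => (Ioi (0:ℝ)).indicator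
            (fun x => x ^ (ν * β i - 1) * Real.exp (-x ^ ν)) x)]
      exact Finset.prod_congr rfl fun i _ => by
        rw [integral_indicator measurableSet_Ioi]; exact h1d (β i) (hβ i)
    · exact h1d βn hβn
  have habs : EqOn (fun p : (Fin m → ℝ) × ℝ => |(gdDer m p.2 p.1).det| • g (gdMap m p))
      (fun p : (Fin m → ℝ) × ℝ =>
        ((∏ i, p.1 i ^ (ν * β i - 1)) * (1 - ∑ i, p.1 i) ^ (ν * βn - 1)) *
        (p.2 ^ (ν * ((∑ i, β i) + βn) - 1) *
          Real.exp (-(((∑ i, p.1 i ^ ν) + (1 - ∑ i, p.1 i) ^ ν) * p.2 ^ ν))))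
      (gdSimplex m ×ˢ Ioi (0:ℝ)) := by
    rintro ⟨q, t⟩ hp
    obtain ⟨hq, hqs⟩ := hp.1
    have ht0 : (0:ℝ) < t := hp.2
    have halg := gdAlg ν β βn q t (fun i => (hq i).1) hqs ht0
    simp only [gdMap, hgdef, Pi.smul_apply, smul_eq_mul, gdDer_det t q hqs,
      abs_of_nonneg (pow_nonneg ht0.le m)]
    exact halg
  rw [setIntegral_congr_fun hs habs] at key
  have hgInt : IntegrableOn g ((univ.pi fun _ : Fin m => Ioi (0:ℝ)) ×ˢ Ioi (0:ℝ)) := by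
    rw [IntegrableOn, Measure.volume_eq_prod _ _, ← Measure.prod_restrict, hgdef]
    refine Integrable.mul_prod
      (f := fun y : Fin m → ℝ => ∏ i, (y i ^ (ν * β i - 1) * Real.exp (-(y i) ^ ν)))
      (g := fun x : ℝ => x ^ (ν * βn - 1) * Real.exp (-x ^ ν)) ?_ ?_
    · have hi : Integrable ((univ.pi fun _ : Fin m => Ioi (0:ℝ)).indicator
          (fun y : Fin m → ℝ => ∏ i, (y i ^ (ν * β i - 1) * Real.exp (-(y i) ^ ν)))) := by
        rw [hindprod]
        exact Integrable.fintype_prod fun i =>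
          (integrable_indicator_iff measurableSet_Ioi).mpr (oneDim_integrable hν (hβ i))
      exact (integrable_indicator_iff (MeasurableSet.univ_pi fun _ => measurableSet_Ioi)).mp hi
    · exact oneDim_integrable hν hβn
  have hFInt : IntegrableOn (fun p : (Fin m → ℝ) × ℝ =>
      ((∏ i, p.1 i ^ (ν * β i - 1)) * (1 - ∑ i, p.1 i) ^ (ν * βn - 1)) *
        (p.2 ^ (ν * ((∑ i, β i) + βn) - 1) *
          Real.exp (-(((∑ i, p.1 i ^ ν) + (1 - ∑ i, p.1 i) ^ ν) * p.2 ^ ν))))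
      (gdSimplex m ×ˢ Ioi (0:ℝ)) := by
    have h0 := (integrableOn_image_iff_integrableOn_abs_det_fderiv_smul volume hs hf'
      (gdInjOn m) g).mp (by rw [gdImage m]; exact hgInt)
    exact h0.congr_fun habs hs
  rw [hLHS] at key
  rw [show (volume : Measure ((Fin m → ℝ) × ℝ))
      = (volume : Measure (Fin m → ℝ)).prod volume from Measure.volume_eq_prod _ _] at key hFInt
  rw [setIntegral_prod _ hFInt] at key
  have hinner : EqOn (fun q : Fin m → ℝ => ∫ t in Ioi (0:ℝ),
        ((∏ i, q i ^ (ν * β i - 1)) * (1 - ∑ i, q i) ^ (ν * βn - 1)) *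
        (t ^ (ν * ((∑ i, β i) + βn) - 1) *
          Real.exp (-(((∑ i, q i ^ ν) + (1 - ∑ i, q i) ^ ν) * t ^ ν))))
      (fun q : Fin m → ℝ => ((1/ν) * Real.Gamma ((∑ i, β i) + βn)) *
        ((∏ i, q i ^ (ν * β i - 1)) * (1 - ∑ i, q i) ^ (ν * βn - 1) *
          ((∑ i, q i ^ ν) + (1 - ∑ i, q i) ^ ν) ^ (-((∑ i, β i) + βn))))
      (gdSimplex m) := by
    rintro q ⟨hq, hqs⟩
    have ha : (0:ℝ) < 1 - ∑ i, q i := by linarith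
    have hT : 0 < (∑ i, q i ^ ν) + (1 - ∑ i, q i) ^ ν :=
      add_pos_of_nonneg_of_pos (Finset.sum_nonneg fun i _ => Real.rpow_nonneg (hq i).1.le ν)
        (Real.rpow_pos_of_pos ha ν)
    simp only
    rw [MeasureTheory.integral_const_mul, oneDim_integral hν hB hT]
    ring
  rw [setIntegral_congr_fun (gdSimplex_measurable m) hinner,
    MeasureTheory.integral_const_mul] at key
  have hΓ : Real.Gamma ((∑ i, β i) + βn) ≠ 0 := (Real.Gamma_pos_of_pos hB).ne'
  have hprod : ∏ i, ((1/ν) * Real.Gamma (β i)) = (1/ν)^m * ∏ i, Real.Gamma (β i) := by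
    rw [Finset.prod_mul_distrib, Finset.prod_const, Finset.card_univ, Fintype.card_fin]
  rw [hprod] at key
  have hc : ((1/ν) * Real.Gamma ((∑ i, β i) + βn)) ≠ 0 :=
    mul_ne_zero (by positivity) hΓ
  refine mul_left_cancel₀ hc ?_
  refine Eq.trans (?_ : _ = ((1/ν)^m * ∏ i, Real.Gamma (β i)) * ((1/ν) * Real.Gamma βn)) ?_
  · exact key.symm
  field_simp
  ring
  rw [← mul_pow, mul_inv_cancel₀ hν.ne', one_pow, one_mul]
end

section
/- Conversely, if M ∼ Beta(β₁, β₂) and Q = (M/(1−M))^{1/ν} / (1 + (M/(1−M))^{1/ν}), then Q has density f_Q(q) = ν [Γ(β₁+β₂)/(Γ(β₁)Γ(β₂))] q^{νβ₁−1}(1−q)^{νβ₂−1}(q^ν + (1−q)^ν)^{−(β₁+β₂)} on (0,1). -/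
open MeasureTheory Real Set ProbabilityTheory

/-- One-dimensional generalized Dirichlet density (n = 2 case). -/
noncomputable def genDir2Pdf (ν β₁ β₂ q : ℝ) : ℝ :=
  ν * (Real.Gamma (β₁ + β₂) / (Real.Gamma β₁ * Real.Gamma β₂)) *
    q ^ (ν * β₁ - 1) * (1 - q) ^ (ν * β₂ - 1) * (q ^ ν + (1 - q) ^ ν) ^ (-(β₁ + β₂))

/-- Beta(β₁, β₂) density on (0,1). -/
noncomputable def betaPdf (β₁ β₂ m : ℝ) : ℝ :=
  m ^ (β₁ - 1) * (1 - m) ^ (β₂ - 1) * Real.Gamma (β₁ + β₂) /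
    (Real.Gamma β₁ * Real.Gamma β₂)

namespace BTAux

noncomputable def Hmap (c x : ℝ) : ℝ := x ^ c / (x ^ c + (1 - x) ^ c)

lemma one_sub_Hmap {c x : ℝ} (hx : x ∈ Ioo (0:ℝ) 1) :
    1 - Hmap c x = (1 - x) ^ c / (x ^ c + (1 - x) ^ c) := by
  obtain ⟨h0, h1⟩ := hx
  have ha : (0:ℝ) < x ^ c := Real.rpow_pos_of_pos h0 c
  have hb : (0:ℝ) < (1 - x) ^ c := Real.rpow_pos_of_pos (by linarith) c
  have hS : x ^ c + (1 - x) ^ c ≠ 0 := by positivity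
  rw [Hmap, eq_div_iff hS, sub_mul, div_mul_cancel₀ _ hS]; ring

lemma Hmap_mem {c x : ℝ} (hx : x ∈ Ioo (0:ℝ) 1) : Hmap c x ∈ Ioo (0:ℝ) 1 := by
  obtain ⟨h0, h1⟩ := hx
  have ha : (0:ℝ) < x ^ c := Real.rpow_pos_of_pos h0 c
  have hb : (0:ℝ) < (1 - x) ^ c := Real.rpow_pos_of_pos (by linarith) c
  rw [Hmap]
  constructor
  · exact div_pos ha (by linarith)
  · rw [div_lt_one (by linarith)]; linarith

lemma Hmap_comp {c : ℝ} (hc : 0 < c) {x : ℝ} (hx : x ∈ Ioo (0:ℝ) 1) :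
    Hmap (1 / c) (Hmap c x) = x := by
  obtain ⟨h0, h1⟩ := hx
  have h1' : (0:ℝ) < 1 - x := by linarith
  have ha : (0:ℝ) < x ^ c := Real.rpow_pos_of_pos h0 c
  have hb : (0:ℝ) < (1 - x) ^ c := Real.rpow_pos_of_pos h1' c
  have hS : (0:ℝ) < x ^ c + (1 - x) ^ c := by linarith
  have hS' : (0:ℝ) < (x ^ c + (1 - x) ^ c) ^ (1 / c) := Real.rpow_pos_of_pos hS _
  have e1 : (x ^ c) ^ (1 / c) = x := by
    rw [← Real.rpow_mul h0.le, mul_one_div_cancel hc.ne', Real.rpow_one]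
  have e2 : ((1 - x) ^ c) ^ (1 / c) = 1 - x := by
    rw [← Real.rpow_mul h1'.le, mul_one_div_cancel hc.ne', Real.rpow_one]
  rw [show Hmap (1/c) (Hmap c x)
        = (Hmap c x) ^ (1/c) / ((Hmap c x) ^ (1/c) + (1 - Hmap c x) ^ (1/c)) from rfl,
    one_sub_Hmap ⟨h0, h1⟩, show Hmap c x = x ^ c / (x ^ c + (1 - x) ^ c) from rfl,
    Real.div_rpow ha.le hS.le, Real.div_rpow hb.le hS.le, e1, e2, ← add_div,
    show x + (1 - x) = 1 from by ring, one_div, div_div_div_cancel_right₀, div_one]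
  exact (Real.rpow_pos_of_pos hS _).ne'

lemma hasDerivAt_Hmap (ν : ℝ) {q : ℝ} (hq : q ∈ Ioo (0:ℝ) 1) :
    HasDerivAt (Hmap ν)
      (ν * q ^ (ν - 1) * (1 - q) ^ (ν - 1) / (q ^ ν + (1 - q) ^ ν) ^ 2) q := by
  obtain ⟨h0, h1⟩ := hq
  have h1' : (0:ℝ) < 1 - q := by linarith
  have hS : (0:ℝ) < q ^ ν + (1 - q) ^ ν := by positivity
  have hu : HasDerivAt (fun x : ℝ => x ^ ν) (ν * q ^ (ν - 1)) q :=
    Real.hasDerivAt_rpow_const (Or.inl h0.ne')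
  have hv : HasDerivAt (fun x : ℝ => (1 - x) ^ ν) (-(ν * (1 - q) ^ (ν - 1))) q := by
    have hg : HasDerivAt (fun y : ℝ => y ^ ν) (ν * (1 - q) ^ (ν - 1)) (1 - q) :=
      Real.hasDerivAt_rpow_const (Or.inl h1'.ne')
    have hf : HasDerivAt (fun x : ℝ => 1 - x) (-1) q := (hasDerivAt_id q).const_sub 1
    have := hg.comp q hf
    simpa [Function.comp_def] using this
  have hdiv := hu.div (hu.add hv) hS.ne'
  convert hdiv using 1
  · rfl
  · rfl
  · rfl
  have e1 : q ^ ν = q ^ (ν - 1) * q := by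
    rw [← Real.rpow_add_one h0.ne', sub_add_cancel]
  have e2 : (1 - q) ^ ν = (1 - q) ^ (ν - 1) * (1 - q) := by
    rw [← Real.rpow_add_one h1'.ne', sub_add_cancel]
  rw [div_eq_div_iff (by positivity) (by positivity)]
  simp only [Pi.add_apply]
  rw [e1, e2]
  ring

lemma density_eq {ν β₁ β₂ : ℝ} (hβ₁ : 0 < β₁) (hβ₂ : 0 < β₂)
    {q : ℝ} (hq : q ∈ Ioo (0:ℝ) 1) :
    ν * q ^ (ν - 1) * (1 - q) ^ (ν - 1) / (q ^ ν + (1 - q) ^ ν) ^ 2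
        * betaPdf β₁ β₂ (Hmap ν q)
      = genDir2Pdf ν β₁ β₂ q := by
  obtain ⟨h0, h1⟩ := hq
  have h1' : (0:ℝ) < 1 - q := by linarith
  have ha : (0:ℝ) < q ^ ν := Real.rpow_pos_of_pos h0 ν
  have hb : (0:ℝ) < (1 - q) ^ ν := Real.rpow_pos_of_pos h1' ν
  have hS : (0:ℝ) < q ^ ν + (1 - q) ^ ν := by linarith
  have hH1 : 1 - Hmap ν q = (1 - q) ^ ν / (q ^ ν + (1 - q) ^ ν) := one_sub_Hmap ⟨h0, h1⟩
  have hb1 : Hmap ν q ^ (β₁ - 1) = q ^ (ν * β₁ - ν) / (q ^ ν + (1 - q) ^ ν) ^ (β₁ - 1) := by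
    rw [show Hmap ν q = q ^ ν / (q ^ ν + (1 - q) ^ ν) from rfl,
      Real.div_rpow ha.le hS.le, ← Real.rpow_mul h0.le, mul_sub, mul_one]
  have hb2 : (1 - Hmap ν q) ^ (β₂ - 1)
      = (1 - q) ^ (ν * β₂ - ν) / (q ^ ν + (1 - q) ^ ν) ^ (β₂ - 1) := by
    rw [hH1, Real.div_rpow hb.le hS.le, ← Real.rpow_mul h1'.le, mul_sub, mul_one]
  have hq1 : q ^ (ν * β₁ - 1) = q ^ (ν - 1) * q ^ (ν * β₁ - ν) := by
    rw [← Real.rpow_add h0]; congr 1; ring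
  have hq2 : (1 - q) ^ (ν * β₂ - 1) = (1 - q) ^ (ν - 1) * (1 - q) ^ (ν * β₂ - ν) := by
    rw [← Real.rpow_add h1']; congr 1; ring
  have hSS : (q ^ ν + (1 - q) ^ ν) ^ (-(β₁ + β₂))
      = 1 / ((q ^ ν + (1 - q) ^ ν) ^ (2:ℕ) * (q ^ ν + (1 - q) ^ ν) ^ (β₁ - 1)
          * (q ^ ν + (1 - q) ^ ν) ^ (β₂ - 1)) := by
    rw [← Real.rpow_natCast _ 2, ← Real.rpow_add hS, ← Real.rpow_add hS,
      Real.rpow_neg hS.le, one_div]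
    congr 1
    push_cast
    ring
  have hG1 : (0:ℝ) < Real.Gamma β₁ := Real.Gamma_pos_of_pos hβ₁
  have hG2 : (0:ℝ) < Real.Gamma β₂ := Real.Gamma_pos_of_pos hβ₂
  rw [betaPdf, genDir2Pdf, hb1, hb2, hq1, hq2, hSS]
  have hSb1 : (0:ℝ) < (q ^ ν + (1 - q) ^ ν) ^ (β₁ - 1) := Real.rpow_pos_of_pos hS _
  have hSb2 : (0:ℝ) < (q ^ ν + (1 - q) ^ ν) ^ (β₂ - 1) := Real.rpow_pos_of_pos hS _
  field_simp

/-- One-variable change of variables for the Lebesgue integral. -/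
lemma lintegral_image_deriv {s : Set ℝ} {f f' : ℝ → ℝ} (hs : MeasurableSet s)
    (hf' : ∀ x ∈ s, HasDerivWithinAt f (f' x) s x) (hf : InjOn f s) (g : ℝ → ENNReal) :
    ∫⁻ x in f '' s, g x = ∫⁻ x in s, ENNReal.ofReal |f' x| * g (f x) := by
  simpa only [ContinuousLinearMap.det_toSpanSingleton] using
    lintegral_image_eq_lintegral_abs_det_fderiv_mul volume hs
      (fun x hx => (hf' x hx).hasFDerivWithinAt) hf g

lemma g_eq {ν m : ℝ} (hm : m ∈ Ioo (0:ℝ) 1) :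
    (m / (1 - m)) ^ (1 / ν) / (1 + (m / (1 - m)) ^ (1 / ν)) = Hmap (1 / ν) m := by
  obtain ⟨h0, h1⟩ := hm
  have h1' : (0:ℝ) < 1 - m := by linarith
  have ha : (0:ℝ) < m ^ (1/ν) := Real.rpow_pos_of_pos h0 _
  have hb : (0:ℝ) < (1 - m) ^ (1/ν) := Real.rpow_pos_of_pos h1' _
  have hr : (m / (1 - m)) ^ (1/ν) = m ^ (1/ν) / (1 - m) ^ (1/ν) :=
    Real.div_rpow h0.le h1'.le _
  rw [hr, Hmap,
    show (1:ℝ) + m ^ (1/ν) / (1 - m) ^ (1/ν)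
      = (m ^ (1/ν) + (1 - m) ^ (1/ν)) / (1 - m) ^ (1/ν) from by
        rw [add_div, div_self hb.ne']; ring,
    div_div_div_cancel_right₀]
  exact hb.ne'

end BTAux

open BTAux

theorem beta_transform_is_genDir2 {Ω : Type*} [MeasurableSpace Ω] (μ : Measure Ω)
    [IsProbabilityMeasure μ] (M : Ω → ℝ) (hM : Measurable M) (ν β₁ β₂ : ℝ)
    (hν : 0 < ν) (hβ₁ : 0 < β₁) (hβ₂ : 0 < β₂)
    (hlaw : μ.map M = volume.withDensity
      (fun m => ENNReal.ofReal (Set.indicator (Set.Ioo 0 1) (betaPdf β₁ β₂) m))) :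
    μ.map (fun ω => (M ω / (1 - M ω)) ^ (1 / ν) / (1 + (M ω / (1 - M ω)) ^ (1 / ν)))
      = volume.withDensity
        (fun q => ENNReal.ofReal (Set.indicator (Set.Ioo 0 1) (genDir2Pdf ν β₁ β₂) q)) := by
  set g : ℝ → ℝ := fun m => (m / (1 - m)) ^ (1 / ν) / (1 + (m / (1 - m)) ^ (1 / ν))
    with hgdef
  have hg : Measurable g := by fun_prop
  have hcomp : μ.map (fun ω => (M ω / (1 - M ω)) ^ (1 / ν)
      / (1 + (M ω / (1 - M ω)) ^ (1 / ν))) = (μ.map M).map g := by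
    rw [Measure.map_map hg hM]; rfl
  rw [hcomp, hlaw]
  ext A hA
  rw [Measure.map_apply hg hA, withDensity_apply _ (hg hA), withDensity_apply _ hA]
  have hind : ∀ (f : ℝ → ℝ) (x : ℝ),
      ENNReal.ofReal ((Ioo (0:ℝ) 1).indicator f x)
        = (Ioo (0:ℝ) 1).indicator (fun y => ENNReal.ofReal (f y)) x := by
    intro f x
    by_cases h : x ∈ Ioo (0:ℝ) 1 <;> simp [h]
  simp_rw [hind]
  rw [lintegral_indicator measurableSet_Ioo, lintegral_indicator measurableSet_Ioo,
    Measure.restrict_restrict measurableSet_Ioo, Measure.restrict_restrict measurableSet_Ioo]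
  -- goal: ∫⁻ x in Ioo 0 1 ∩ g ⁻¹' A, ofReal (betaPdf β₁ β₂ x)
  --     = ∫⁻ x in Ioo 0 1 ∩ A, ofReal (genDir2Pdf ν β₁ β₂ x)
  have himg : Hmap ν '' (Ioo (0:ℝ) 1 ∩ A) = Ioo (0:ℝ) 1 ∩ g ⁻¹' A := by
    ext y
    constructor
    · rintro ⟨x, ⟨hx, hxA⟩, rfl⟩
      refine ⟨Hmap_mem hx, ?_⟩
      show g (Hmap ν x) ∈ A
      rw [hgdef]
      simp only
      rw [g_eq (Hmap_mem hx), Hmap_comp hν hx]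
      exact hxA
    · rintro ⟨hy, hyA⟩
      have hgy : g y = Hmap (1/ν) y := g_eq hy
      have hmem : g y ∈ Ioo (0:ℝ) 1 := hgy ▸ Hmap_mem hy
      refine ⟨g y, ⟨hmem, hyA⟩, ?_⟩
      rw [hgy]
      have := Hmap_comp (c := 1/ν) (by positivity) hy
      rwa [one_div_one_div] at this
  have hinj : InjOn (Hmap ν) (Ioo (0:ℝ) 1 ∩ A) := by
    intro x hx y hy hxy
    have h1 := Hmap_comp hν hx.1
    have h2 := Hmap_comp hν hy.1
    rw [← h1, ← h2, hxy]
  have hder : ∀ x ∈ Ioo (0:ℝ) 1 ∩ A,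
      HasDerivWithinAt (Hmap ν)
        (ν * x ^ (ν - 1) * (1 - x) ^ (ν - 1) / (x ^ ν + (1 - x) ^ ν) ^ 2)
        (Ioo (0:ℝ) 1 ∩ A) x :=
    fun x hx => (hasDerivAt_Hmap ν hx.1).hasDerivWithinAt
  rw [← himg, lintegral_image_deriv (measurableSet_Ioo.inter hA) hder hinj]
  refine setLIntegral_congr_fun (measurableSet_Ioo.inter hA) ?_
  intro x hx
  obtain ⟨⟨h0, h1⟩, -⟩ := hx
  have h1' : (0:ℝ) < 1 - x := by linarith
  have hD : 0 ≤ ν * x ^ (ν - 1) * (1 - x) ^ (ν - 1) / (x ^ ν + (1 - x) ^ ν) ^ 2 := by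
    positivity
  dsimp only
  rw [abs_of_nonneg hD, ← ENNReal.ofReal_mul hD, density_eq hβ₁ hβ₂ ⟨h0, h1⟩]
end

section
/- Let Z₁ and Z₂ be independent with Zᵢ^ν ∼ Gamma(βᵢ,1) (i.e. Zᵢ has generalized Gamma density ν z^{νβᵢ−1} e^{−z^ν}/Γ(βᵢ)), ν > 0. Then Q = Z₁/(Z₁+Z₂) has density f_Q(q) = ν [Γ(β₁+β₂)/(Γ(β₁)Γ(β₂))] q^{νβ₁−1}(1−q)^{νβ₂−1}(q^ν + (1−q)^ν)^{−(β₁+β₂)} on (0,1). -/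
open MeasureTheory Real Set ProbabilityTheory

/-- Density of the generalized Gamma distribution with parameters ν, α. -/
noncomputable def genGammaPdf (ν α x : ℝ) : ℝ :=
  ν * x ^ (ν * α - 1) * Real.exp (-(x ^ ν)) / Real.Gamma α

/- Auxiliary lemmas -/

lemma genGamma_lintegral_cov {s : Set ℝ} {f f' : ℝ → ℝ} (hs : MeasurableSet s)
    (hf' : ∀ x ∈ s, HasDerivWithinAt f (f' x) s x) (hf : InjOn f s) (g : ℝ → ENNReal) :
    ∫⁻ x in f '' s, g x = ∫⁻ x in s, ENNReal.ofReal |f' x| * g (f x) := by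
  simpa only [ContinuousLinearMap.det_toSpanSingleton] using
    MeasureTheory.lintegral_image_eq_lintegral_abs_det_fderiv_mul volume hs
      (fun x hx => (hf' x hx).hasFDerivWithinAt) hf g

lemma genGamma_measurable (ν α : ℝ) : Measurable (genGammaPdf ν α) := by
  unfold genGammaPdf; fun_prop

lemma genGamma_nonneg {ν α x : ℝ} (hν : 0 < ν) (hα : 0 < α) (hx : 0 < x) :
    0 ≤ genGammaPdf ν α x := by
  unfold genGammaPdf
  have hΓ : 0 < Real.Gamma α := Real.Gamma_pos_of_pos hα
  positivity

lemma genGamma_lemA {ν β c : ℝ} (hν : 0 < ν) (hβ : 0 < β) (hc : 0 < c) :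
    ∫⁻ x in Ioi (0:ℝ), ENNReal.ofReal (ν * x ^ (ν * β - 1) * Real.exp (-(c * x ^ ν)))
      = ENNReal.ofReal (Real.Gamma β * c ^ (-β)) := by
  have himg : (fun x : ℝ => c * x ^ ν) '' Ioi 0 = Ioi 0 := by
    ext y
    constructor
    · rintro ⟨x, hx, rfl⟩
      exact mul_pos hc (Real.rpow_pos_of_pos hx _)
    · intro hy
      refine ⟨(y / c) ^ ν⁻¹, Real.rpow_pos_of_pos (div_pos hy hc) _, ?_⟩
      show c * ((y / c) ^ ν⁻¹) ^ ν = y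
      rw [← Real.rpow_mul (div_pos hy hc).le, inv_mul_cancel₀ hν.ne', Real.rpow_one,
        mul_div_cancel₀ _ hc.ne']
  have hderiv : ∀ x ∈ Ioi (0:ℝ), HasDerivWithinAt (fun x : ℝ => c * x ^ ν)
      (c * (ν * x ^ (ν - 1))) (Ioi 0) x := fun x hx =>
    ((Real.hasDerivAt_rpow_const (Or.inl (ne_of_gt hx))).const_mul c).hasDerivWithinAt
  have hmono : StrictMonoOn (fun x : ℝ => c * x ^ ν) (Ioi 0) := fun a ha b _ h =>
    mul_lt_mul_of_pos_left (Real.rpow_lt_rpow (le_of_lt ha) h hν) hc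
  have key := genGamma_lintegral_cov (f := fun x : ℝ => c * x ^ ν)
    (f' := fun x => c * (ν * x ^ (ν-1)))
    measurableSet_Ioi hderiv hmono.injOn
    (fun y => ENNReal.ofReal (Real.exp (-y) * y ^ (β - 1) * c ^ (-β)))
  rw [himg] at key
  have hGamma : ∫⁻ y in Ioi (0:ℝ), ENNReal.ofReal (Real.exp (-y) * y ^ (β - 1) * c ^ (-β))
      = ENNReal.ofReal (Real.Gamma β * c ^ (-β)) := by
    have hint : IntegrableOn (fun y : ℝ => Real.exp (-y) * y ^ (β - 1) * c ^ (-β)) (Ioi 0) :=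
      (Real.GammaIntegral_convergent hβ).mul_const _
    rw [← ofReal_integral_eq_lintegral_ofReal hint]
    · rw [MeasureTheory.integral_mul_const, ← Real.Gamma_eq_integral hβ]
    · filter_upwards [ae_restrict_mem measurableSet_Ioi] with y hy
      have : (0:ℝ) < y := hy
      positivity
  rw [hGamma] at key
  rw [key]
  refine setLIntegral_congr_fun_ae measurableSet_Ioi ?_
  filter_upwards with x hx
  have hx : (0:ℝ) < x := hx
  rw [abs_of_nonneg (by positivity)]
  rw [← ENNReal.ofReal_mul (by positivity)]
  congr 1
  have h1 : (c * x ^ ν) ^ (β - 1) = c ^ (β - 1) * (x ^ ν) ^ (β - 1) :=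
    Real.mul_rpow hc.le (Real.rpow_pos_of_pos hx ν).le
  have h2 : (x ^ ν) ^ (β - 1) = x ^ (ν * (β - 1)) := by
    rw [← Real.rpow_mul hx.le]
  have h3 : x ^ (ν * β - 1) = x ^ (ν - 1) * x ^ (ν * (β - 1)) := by
    rw [← Real.rpow_add hx]; ring_nf
  have h4 : c ^ (β - 1) * c ^ (-β) = c⁻¹ := by
    rw [← Real.rpow_add hc, ← Real.rpow_neg_one c]; ring_nf
  rw [h1, h2, h3]
  have hinv : c * c⁻¹ = 1 := mul_inv_cancel₀ hc.ne'
  linear_combination (-(c * ν * x ^ (ν-1) * x ^ (ν*(β-1)) * Real.exp (-(c * x ^ ν)))) * h4 +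
    (-(ν * x ^ (ν-1) * x ^ (ν*(β-1)) * Real.exp (-(c * x ^ ν)))) * hinv

lemma genGamma_alg1 {ν β₁ β₂ q x : ℝ} (hβ₁ : 0 < β₁) (hβ₂ : 0 < β₂)
    (hq0 : 0 < q) (hq1 : q < 1) (hx : 0 < x) :
    genGammaPdf ν β₁ x * (x / q ^ 2 * genGammaPdf ν β₂ (x / q - x))
      = (ν / (Real.Gamma β₁ * Real.Gamma β₂) * ((1 - q) / q) ^ (ν * β₂ - 1) / q ^ 2) *
        (ν * x ^ (ν * (β₁ + β₂) - 1) * Real.exp (-((1 + ((1 - q) / q) ^ ν) * x ^ ν))) := by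
  have hr : (0:ℝ) < (1 - q) / q := div_pos (by linarith) hq0
  have hΓ₁ : (0:ℝ) < Real.Gamma β₁ := Real.Gamma_pos_of_pos hβ₁
  have hΓ₂ : (0:ℝ) < Real.Gamma β₂ := Real.Gamma_pos_of_pos hβ₂
  have hxr : x / q - x = x * ((1 - q) / q) := by field_simp
  rw [genGammaPdf, genGammaPdf, hxr]
  rw [Real.mul_rpow hx.le hr.le, Real.mul_rpow hx.le hr.le]
  have h3 : x ^ (ν * (β₁ + β₂) - 1) = x ^ (ν * β₁ - 1) * x ^ (ν * β₂ - 1) * x ^ (1:ℝ) := by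
    rw [← Real.rpow_add hx, ← Real.rpow_add hx]; ring_nf
  have h4 : Real.exp (-((1 + ((1 - q) / q) ^ ν) * x ^ ν))
      = Real.exp (-(x ^ ν)) * Real.exp (-(x ^ ν * ((1 - q) / q) ^ ν)) := by
    rw [← Real.exp_add]; congr 1; ring
  rw [h3, h4, Real.rpow_one]
  field_simp

lemma genGamma_alg2 {ν β₁ β₂ q : ℝ} (hβ₁ : 0 < β₁) (hβ₂ : 0 < β₂)
    (hq0 : 0 < q) (hq1 : q < 1) :
    (ν / (Real.Gamma β₁ * Real.Gamma β₂) * ((1 - q) / q) ^ (ν * β₂ - 1) / q ^ 2) *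
      (Real.Gamma (β₁ + β₂) * (1 + ((1 - q) / q) ^ ν) ^ (-(β₁ + β₂)))
    = genDir2Pdf ν β₁ β₂ q := by
  have hq1' : (0:ℝ) < 1 - q := by linarith
  have hS : (0:ℝ) < q ^ ν + (1 - q) ^ ν :=
    add_pos (Real.rpow_pos_of_pos hq0 _) (Real.rpow_pos_of_pos hq1' _)
  have hqν : (0:ℝ) < q ^ ν := Real.rpow_pos_of_pos hq0 _
  have h1 : ((1 - q) / q : ℝ) ^ ν = (1 - q) ^ ν / q ^ ν := Real.div_rpow hq1'.le hq0.le ν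
  have h2 : ((1 - q) / q : ℝ) ^ (ν * β₂ - 1) = (1 - q) ^ (ν * β₂ - 1) / q ^ (ν * β₂ - 1) :=
    Real.div_rpow hq1'.le hq0.le _
  have hc : (1 : ℝ) + ((1 - q) / q) ^ ν = (q ^ ν + (1 - q) ^ ν) / q ^ ν := by
    rw [h1]; field_simp
  have h3 : ((q ^ ν + (1 - q) ^ ν) / q ^ ν : ℝ) ^ (-(β₁ + β₂))
      = (q ^ ν + (1 - q) ^ ν) ^ (-(β₁ + β₂)) / (q ^ ν) ^ (-(β₁ + β₂)) :=
    Real.div_rpow hS.le hqν.le _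
  have h4 : ((q ^ ν : ℝ)) ^ (-(β₁ + β₂)) = q ^ (-(ν * (β₁ + β₂))) := by
    rw [← Real.rpow_mul hq0.le]; ring_nf
  have hkey : q ^ (ν * β₁ - 1) * q ^ (ν * β₂ - 1) * q ^ 2 * q ^ (-(ν * (β₁ + β₂))) = 1 := by
    rw [show (q:ℝ) ^ 2 = q ^ (2:ℝ) by rw [← Real.rpow_natCast q 2]; norm_num,
      ← Real.rpow_add hq0, ← Real.rpow_add hq0, ← Real.rpow_add hq0]
    rw [show ν * β₁ - 1 + (ν * β₂ - 1) + 2 + -(ν * (β₁ + β₂)) = 0 by ring, Real.rpow_zero]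
  rw [hc, h3, h4, h2, genDir2Pdf]
  have hΓ₁ : (0:ℝ) < Real.Gamma β₁ := Real.Gamma_pos_of_pos hβ₁
  have hΓ₂ : (0:ℝ) < Real.Gamma β₂ := Real.Gamma_pos_of_pos hβ₂
  have hq2 : (q:ℝ) ^ (ν * β₂ - 1) ≠ 0 := (Real.rpow_pos_of_pos hq0 _).ne'
  have hq3 : (q:ℝ) ^ (-(ν * (β₁ + β₂))) ≠ 0 := (Real.rpow_pos_of_pos hq0 _).ne'
  field_simp
  linear_combination (-ν) * hkey

lemma genGamma_slice_eval {x : ℝ} {A : Set ℝ} (hA : MeasurableSet A) (hx : 0 < x)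
    (g : ℝ → ENNReal) :
    ∫⁻ y in Ioi 0 ∩ (fun y => x / (x + y)) ⁻¹' A, g y
      = ∫⁻ q in Ioo 0 1 ∩ A, ENNReal.ofReal (x / q ^ 2) * g (x / q - x) := by
  have hs : MeasurableSet (Ioo (0:ℝ) 1 ∩ A) := measurableSet_Ioo.inter hA
  have himg : (fun q : ℝ => x / q - x) '' (Ioo 0 1 ∩ A)
      = Ioi 0 ∩ (fun y => x / (x + y)) ⁻¹' A := by
    ext y
    simp only [mem_image, mem_inter_iff, mem_Ioo, mem_Ioi, mem_preimage]
    constructor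
    · rintro ⟨q, ⟨⟨hq0, hq1⟩, hqA⟩, rfl⟩
      have hy : 0 < x / q - x := by
        rw [sub_pos, lt_div_iff₀ hq0]
        nlinarith
      refine ⟨hy, ?_⟩
      have heq : x / (x + (x / q - x)) = q := by
        rw [show x + (x / q - x) = x / q by ring, div_div_eq_mul_div, mul_comm,
          mul_div_assoc, div_self hx.ne', mul_one]
      rw [heq]; exact hqA
    · rintro ⟨hy0, hyA⟩
      have hxy : 0 < x + y := by linarith
      refine ⟨x / (x + y), ⟨⟨div_pos hx hxy, (div_lt_one hxy).mpr (by linarith)⟩, hyA⟩, ?_⟩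
      field_simp; ring
  have hderiv : ∀ q ∈ Ioo (0:ℝ) 1 ∩ A, HasDerivWithinAt (fun q : ℝ => x / q - x)
      (-(x / q ^ 2)) (Ioo 0 1 ∩ A) q := by
    intro q hq
    have hq0 : (0:ℝ) < q := hq.1.1
    have h : HasDerivAt (fun q : ℝ => x / q - x) (-(x / q ^ 2)) q := by
      simpa [div_eq_mul_inv, mul_neg] using
        ((hasDerivAt_inv hq0.ne').const_mul x).sub_const x
    exact h.hasDerivWithinAt
  have hinj : InjOn (fun q : ℝ => x / q - x) (Ioo 0 1 ∩ A) := by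
    intro a ha b hb hab
    simp only at hab
    have ha0 : (0:ℝ) < a := ha.1.1
    have hb0 : (0:ℝ) < b := hb.1.1
    have h1 : x / a = x / b := by linarith
    field_simp at h1
    rcases h1 with h | h
    · rfl
  rw [← himg, genGamma_lintegral_cov hs hderiv hinj g]
  refine setLIntegral_congr_fun_ae hs ?_
  filter_upwards with q hq
  have hq0 : (0:ℝ) < q := hq.1.1
  rw [abs_neg, abs_of_nonneg (by positivity)]

lemma genGamma_inner_eval {ν β₁ β₂ q : ℝ} (hν : 0 < ν) (hβ₁ : 0 < β₁) (hβ₂ : 0 < β₂)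
    (hq0 : 0 < q) (hq1 : q < 1) :
    ∫⁻ x in Ioi (0:ℝ), ENNReal.ofReal (genGammaPdf ν β₁ x) *
      (ENNReal.ofReal (x / q ^ 2) * ENNReal.ofReal (genGammaPdf ν β₂ (x / q - x)))
      = ENNReal.ofReal (genDir2Pdf ν β₁ β₂ q) := by
  have hr : (0:ℝ) < (1 - q) / q := div_pos (by linarith) hq0
  have hc : (0:ℝ) < 1 + ((1 - q) / q) ^ ν := by positivity
  have hΓ₁ : (0:ℝ) < Real.Gamma β₁ := Real.Gamma_pos_of_pos hβ₁
  have hΓ₂ : (0:ℝ) < Real.Gamma β₂ := Real.Gamma_pos_of_pos hβ₂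
  have hC : (0:ℝ) ≤ ν / (Real.Gamma β₁ * Real.Gamma β₂) * ((1 - q) / q) ^ (ν * β₂ - 1) / q ^ 2 := by
    positivity
  have step : ∀ᵐ x ∂volume, x ∈ Ioi (0:ℝ) →
      ENNReal.ofReal (genGammaPdf ν β₁ x) *
        (ENNReal.ofReal (x / q ^ 2) * ENNReal.ofReal (genGammaPdf ν β₂ (x / q - x)))
      = ENNReal.ofReal (ν / (Real.Gamma β₁ * Real.Gamma β₂) *
          ((1 - q) / q) ^ (ν * β₂ - 1) / q ^ 2) *
        ENNReal.ofReal (ν * x ^ (ν * (β₁ + β₂) - 1) *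
          Real.exp (-((1 + ((1 - q) / q) ^ ν) * x ^ ν))) := by
    filter_upwards with x hx
    have hx : (0:ℝ) < x := hx
    rw [← ENNReal.ofReal_mul (by positivity : (0:ℝ) ≤ x / q ^ 2),
      ← ENNReal.ofReal_mul (genGamma_nonneg hν hβ₁ hx),
      genGamma_alg1 hβ₁ hβ₂ hq0 hq1 hx, ENNReal.ofReal_mul hC]
  rw [setLIntegral_congr_fun_ae measurableSet_Ioi step,
    lintegral_const_mul' _ _ ENNReal.ofReal_ne_top,
    genGamma_lemA hν (add_pos hβ₁ hβ₂) hc,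
    ← ENNReal.ofReal_mul hC, genGamma_alg2 hβ₁ hβ₂ hq0 hq1]

theorem genGamma_ratio_is_genDir2 {Ω : Type*} [MeasurableSpace Ω] (μ : Measure Ω)
    [IsProbabilityMeasure μ] (Z₁ Z₂ : Ω → ℝ) (hZ₁ : Measurable Z₁)
    (hZ₂ : Measurable Z₂) (hindep : IndepFun Z₁ Z₂ μ) (ν β₁ β₂ : ℝ)
    (hν : 0 < ν) (hβ₁ : 0 < β₁) (hβ₂ : 0 < β₂)
    (hlaw₁ : μ.map Z₁ = volume.withDensity
      (fun z => ENNReal.ofReal (Set.indicator (Set.Ioi 0) (genGammaPdf ν β₁) z)))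
    (hlaw₂ : μ.map Z₂ = volume.withDensity
      (fun z => ENNReal.ofReal (Set.indicator (Set.Ioi 0) (genGammaPdf ν β₂) z))) :
    μ.map (fun ω => Z₁ ω / (Z₁ ω + Z₂ ω))
      = volume.withDensity
        (fun q => ENNReal.ofReal (Set.indicator (Set.Ioo 0 1) (genDir2Pdf ν β₁ β₂) q)) := by
  have hfm : Measurable (fun p : ℝ × ℝ => p.1 / (p.1 + p.2)) :=
    measurable_fst.div (measurable_fst.add measurable_snd)
  have hmap : μ.map (fun ω => Z₁ ω / (Z₁ ω + Z₂ ω))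
      = ((μ.map Z₁).prod (μ.map Z₂)).map (fun p : ℝ × ℝ => p.1 / (p.1 + p.2)) := by
    rw [← (indepFun_iff_map_prod_eq_prod_map_map hZ₁.aemeasurable hZ₂.aemeasurable).mp hindep,
      Measure.map_map hfm (hZ₁.prodMk hZ₂)]
    rfl
  rw [hmap, hlaw₁, hlaw₂]
  have hD₁ : Measurable fun z : ℝ =>
      ENNReal.ofReal ((Ioi (0:ℝ)).indicator (genGammaPdf ν β₁) z) :=
    ((genGamma_measurable ν β₁).indicator measurableSet_Ioi).ennreal_ofReal
  refine Measure.ext fun A hA => ?_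
  have hsA : MeasurableSet (Ioo (0:ℝ) 1 ∩ A) := measurableSet_Ioo.inter hA
  rw [Measure.map_apply hfm hA, Measure.prod_apply (hfm hA),
    lintegral_withDensity_eq_lintegral_mul_non_measurable _ hD₁
      (Filter.Eventually.of_forall fun x => ENNReal.ofReal_lt_top) _]
  simp only [Pi.mul_apply]
  have hrw : ∀ x : ℝ,
      ENNReal.ofReal ((Ioi (0:ℝ)).indicator (genGammaPdf ν β₁) x) *
        (volume.withDensity fun z =>
          ENNReal.ofReal ((Ioi (0:ℝ)).indicator (genGammaPdf ν β₂) z))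
          (Prod.mk x ⁻¹' ((fun p : ℝ × ℝ => p.1 / (p.1 + p.2)) ⁻¹' A))
      = (Ioi (0:ℝ)).indicator (fun x =>
          ENNReal.ofReal (genGammaPdf ν β₁ x) *
          (volume.withDensity fun z =>
            ENNReal.ofReal ((Ioi (0:ℝ)).indicator (genGammaPdf ν β₂) z))
            (Prod.mk x ⁻¹' ((fun p : ℝ × ℝ => p.1 / (p.1 + p.2)) ⁻¹' A))) x := by
    intro x
    by_cases h : x ∈ Ioi (0:ℝ) <;> simp [h]
  rw [lintegral_congr hrw, lintegral_indicator measurableSet_Ioi]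
  -- evaluate the slice measure for x > 0
  have hslice : ∀ᵐ x ∂volume, x ∈ Ioi (0:ℝ) →
      ENNReal.ofReal (genGammaPdf ν β₁ x) *
        (volume.withDensity fun z =>
          ENNReal.ofReal ((Ioi (0:ℝ)).indicator (genGammaPdf ν β₂) z))
          (Prod.mk x ⁻¹' ((fun p : ℝ × ℝ => p.1 / (p.1 + p.2)) ⁻¹' A))
      = ∫⁻ q in Ioo 0 1 ∩ A, ENNReal.ofReal (genGammaPdf ν β₁ x) *
          (ENNReal.ofReal (x / q ^ 2) *
            ENNReal.ofReal (genGammaPdf ν β₂ (x / q - x))) := by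
    filter_upwards with x hx
    have hx : (0:ℝ) < x := hx
    have hSx : MeasurableSet ((fun y : ℝ => x / (x + y)) ⁻¹' A) :=
      (measurable_const.div (measurable_const.add measurable_id)) hA
    have hpre : Prod.mk x ⁻¹' ((fun p : ℝ × ℝ => p.1 / (p.1 + p.2)) ⁻¹' A)
        = (fun y : ℝ => x / (x + y)) ⁻¹' A := rfl
    rw [hpre, withDensity_apply _ hSx]
    have : ∫⁻ y in (fun y : ℝ => x / (x + y)) ⁻¹' A,
        ENNReal.ofReal ((Ioi (0:ℝ)).indicator (genGammaPdf ν β₂) y)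
        = ∫⁻ y in Ioi 0 ∩ (fun y : ℝ => x / (x + y)) ⁻¹' A,
            ENNReal.ofReal (genGammaPdf ν β₂ y) := by
      rw [← Measure.restrict_restrict measurableSet_Ioi, ← lintegral_indicator measurableSet_Ioi]
      refine lintegral_congr fun y => ?_
      by_cases h : y ∈ Ioi (0:ℝ) <;> simp [h]
    rw [this, genGamma_slice_eval hA hx,
      ← lintegral_const_mul' _ _ ENNReal.ofReal_ne_top]
  rw [setLIntegral_congr_fun_ae measurableSet_Ioi hslice]
  -- swap the order of integration
  have hswap : ∫⁻ x in Ioi (0:ℝ), ∫⁻ q in Ioo 0 1 ∩ A,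
      ENNReal.ofReal (genGammaPdf ν β₁ x) * (ENNReal.ofReal (x / q ^ 2) *
        ENNReal.ofReal (genGammaPdf ν β₂ (x / q - x)))
      = ∫⁻ q in Ioo 0 1 ∩ A, ∫⁻ x in Ioi (0:ℝ),
          ENNReal.ofReal (genGammaPdf ν β₁ x) * (ENNReal.ofReal (x / q ^ 2) *
            ENNReal.ofReal (genGammaPdf ν β₂ (x / q - x))) := by
    refine lintegral_lintegral_swap ?_
    apply Measurable.aemeasurable
    show Measurable ((fun p : ℝ × ℝ => ENNReal.ofReal (genGammaPdf ν β₁ p.1)) *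
      ((fun p : ℝ × ℝ => ENNReal.ofReal (p.1 / p.2 ^ 2)) *
        fun p : ℝ × ℝ => ENNReal.ofReal (genGammaPdf ν β₂ (p.1 / p.2 - p.1))))
    apply Measurable.mul
    · exact ((genGamma_measurable ν β₁).comp measurable_fst).ennreal_ofReal
    apply Measurable.mul
    · exact (measurable_fst.div ((measurable_snd.pow measurable_const))).ennreal_ofReal
    · exact ((genGamma_measurable ν β₂).comp
        ((measurable_fst.div measurable_snd).sub measurable_fst)).ennreal_ofReal
  rw [hswap]
  -- evaluate the inner integral
  have hfinal : ∀ᵐ q ∂volume, q ∈ Ioo (0:ℝ) 1 ∩ A →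
      (∫⁻ x in Ioi (0:ℝ), ENNReal.ofReal (genGammaPdf ν β₁ x) *
        (ENNReal.ofReal (x / q ^ 2) * ENNReal.ofReal (genGammaPdf ν β₂ (x / q - x))))
      = ENNReal.ofReal (genDir2Pdf ν β₁ β₂ q) := by
    filter_upwards with q hq
    exact genGamma_inner_eval hν hβ₁ hβ₂ hq.1.1 hq.1.2
  rw [setLIntegral_congr_fun_ae hsA hfinal]
  -- compare with the right-hand side
  rw [withDensity_apply _ hA]
  have : ∫⁻ q in A, ENNReal.ofReal ((Ioo (0:ℝ) 1).indicator (genDir2Pdf ν β₁ β₂) q)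
      = ∫⁻ q in Ioo 0 1 ∩ A, ENNReal.ofReal (genDir2Pdf ν β₁ β₂ q) := by
    rw [← Measure.restrict_restrict measurableSet_Ioo, ← lintegral_indicator measurableSet_Ioo]
    refine lintegral_congr fun q => ?_
    by_cases h : q ∈ Ioo (0:ℝ) 1 <;> simp [h]
  rw [this]
end
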